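/- arXiv:1006.3461 — 8 statements merged into one kernel-verified Lean document; each statement's English description precedes it below -/
import Mathlib

section
/- Let V be a complex Banach space and let W, W' : V × V → ℂ be bounded bilinear forms. Then for every even natural number n ≥ 2 and all vectors v₁, …, vₙ ∈ V, the quasi-free n-point functions satisfy |ω_W(v₁,…,vₙ) − ω_{W'}(v₁,…,vₙ)| ≤ ‖v₁‖⋯‖vₙ‖ · ‖W − W'‖ · |Π₂(n)| · ∑_{k=1}^{n/2} ‖W‖^{k−1} ‖W'‖^{n/2−k}. -/
open scoped BigOperators

/-- The set of pair partitions `Π₂(n)` of `{1,…,n}`, encoded as the fixed-point-free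
involutions of `Fin n` (each such involution `σ` corresponds bijectively to the pair
partition whose blocks are the pairs `{i, σ i}`). -/
noncomputable def pairings (n : ℕ) : Finset (Equiv.Perm (Fin n)) :=
  Finset.univ.filter (fun σ => σ * σ = 1 ∧ ∀ i, σ i ≠ i)

/-- The quasi-free `n`-point function `ω_W(v₁,…,vₙ) = ∑_{P ∈ Π₂(n)} ∏_{(i,j)∈P, i<j} W(v_i,v_j)`
associated with a bounded bilinear form `W`. -/
noncomputable def qfFun {V : Type*} [NormedAddCommGroup V] [NormedSpace ℂ V]
    (W : V →L[ℂ] V →L[ℂ] ℂ) (n : ℕ) (v : Fin n → V) : ℂ :=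
  ∑ σ ∈ pairings n, ∏ i ∈ Finset.univ.filter (fun i : Fin n => i < σ i), W (v i) (v (σ i))

lemma telescope {ι : Type*} [DecidableEq ι] (s : Finset ι) (f g : ι → ℂ) (c : ι → ℝ)
    (C C' D : ℝ) (hC : 0 ≤ C) (hC' : 0 ≤ C') (hD : 0 ≤ D) (hc : ∀ i ∈ s, 0 ≤ c i)
    (hf : ∀ i ∈ s, ‖f i‖ ≤ C * c i)
    (hg : ∀ i ∈ s, ‖g i‖ ≤ C' * c i)
    (hfg : ∀ i ∈ s, ‖f i - g i‖ ≤ D * c i) :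
    ‖∏ i ∈ s, f i - ∏ i ∈ s, g i‖ ≤
      (∏ i ∈ s, c i) * D *
        ∑ k ∈ Finset.Icc 1 s.card, C ^ (k - 1) * C' ^ (s.card - k) := by
  induction s using Finset.induction with
  | empty => simp
  | @insert a s ha ih =>
    have hc' : ∀ i ∈ s, 0 ≤ c i := fun i hi => hc i (Finset.mem_insert_of_mem hi)
    have hca : 0 ≤ c a := hc a (Finset.mem_insert_self a s)
    have hprodc : 0 ≤ ∏ i ∈ s, c i := Finset.prod_nonneg hc'
    have hgprod : ‖∏ i ∈ s, g i‖ ≤ C' ^ s.card * ∏ i ∈ s, c i := by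
      rw [norm_prod]
      calc ∏ i ∈ s, ‖g i‖ ≤ ∏ i ∈ s, (C' * c i) :=
            Finset.prod_le_prod (fun i _ => norm_nonneg _)
              (fun i hi => hg i (Finset.mem_insert_of_mem hi))
        _ = C' ^ s.card * ∏ i ∈ s, c i := by
            rw [Finset.prod_mul_distrib, Finset.prod_const]
    have ihs := ih hc' (fun i hi => hf i (Finset.mem_insert_of_mem hi))
      (fun i hi => hg i (Finset.mem_insert_of_mem hi))
      (fun i hi => hfg i (Finset.mem_insert_of_mem hi))
    rw [Finset.prod_insert ha, Finset.prod_insert ha, Finset.prod_insert ha,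
      Finset.card_insert_of_notMem ha]
    have key : f a * ∏ i ∈ s, f i - g a * ∏ i ∈ s, g i
        = f a * (∏ i ∈ s, f i - ∏ i ∈ s, g i) + (f a - g a) * ∏ i ∈ s, g i := by ring
    rw [key]
    have h1 : ‖f a * (∏ i ∈ s, f i - ∏ i ∈ s, g i)
        + (f a - g a) * ∏ i ∈ s, g i‖
        ≤ ‖f a‖ * ‖∏ i ∈ s, f i - ∏ i ∈ s, g i‖
          + ‖f a - g a‖ * ‖∏ i ∈ s, g i‖ := by
      calc _ ≤ ‖f a * (∏ i ∈ s, f i - ∏ i ∈ s, g i)‖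
            + ‖(f a - g a) * ∏ i ∈ s, g i‖ := norm_add_le _ _
        _ = _ := by rw [norm_mul, norm_mul]
    refine h1.trans ?_
    have h2 : ‖f a‖ * ‖∏ i ∈ s, f i - ∏ i ∈ s, g i‖
          + ‖f a - g a‖ * ‖∏ i ∈ s, g i‖
        ≤ (C * c a) * ((∏ i ∈ s, c i) * D *
            ∑ k ∈ Finset.Icc 1 s.card, C ^ (k - 1) * C' ^ (s.card - k))
          + (D * c a) * (C' ^ s.card * ∏ i ∈ s, c i) := by
      have hb1 : (0:ℝ) ≤ (∏ i ∈ s, c i) * D *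
            ∑ k ∈ Finset.Icc 1 s.card, C ^ (k - 1) * C' ^ (s.card - k) := by
        have : (0:ℝ) ≤ ∑ k ∈ Finset.Icc 1 s.card, C ^ (k - 1) * C' ^ (s.card - k) :=
          Finset.sum_nonneg fun k _ => mul_nonneg (pow_nonneg hC _) (pow_nonneg hC' _)
        positivity
      exact add_le_add
        (mul_le_mul (hf a (Finset.mem_insert_self a s)) ihs (norm_nonneg _)
          (by positivity))
        (mul_le_mul (hfg a (Finset.mem_insert_self a s)) hgprod (norm_nonneg _)
          (by positivity))
    refine h2.trans (le_of_eq ?_)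
    set m := s.card with hm
    -- sum manipulation
    have hsum : ∑ k ∈ Finset.Icc 1 (m + 1), C ^ (k - 1) * C' ^ (m + 1 - k)
        = C * (∑ k ∈ Finset.Icc 1 m, C ^ (k - 1) * C' ^ (m - k)) + C' ^ m := by
      rw [← Finset.Ico_add_one_right_eq_Icc, ← Finset.Ico_add_one_right_eq_Icc,
        Finset.sum_Ico_eq_sum_range, Finset.sum_Ico_eq_sum_range]
      simp only [Nat.add_sub_cancel, Nat.succ_sub_one]
      rw [Finset.sum_range_succ']
      rw [Finset.mul_sum]
      congr 1
      · apply Finset.sum_congr rfl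
        intro i hi
        have : m + 1 - (1 + (i + 1)) = m - 1 - i := by omega
        rw [this]
        have : m - (1 + i) = m - 1 - i := by omega
        rw [this]
        have e1 : 1 + (i + 1) - 1 = i + 1 := by omega
        have e2 : 1 + i - 1 = i := by omega
        rw [e1, e2, pow_succ]
        ring
      · simp
    rw [hsum]
    ring

theorem stmt0 {V : Type*} [NormedAddCommGroup V] [NormedSpace ℂ V] [CompleteSpace V]
    (W W' : V →L[ℂ] V →L[ℂ] ℂ) (n : ℕ) (hn : 2 ≤ n) (hev : Even n) (v : Fin n → V) :
    ‖qfFun W n v - qfFun W' n v‖ ≤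
      (∏ i, ‖v i‖) * ‖W - W'‖ * ((pairings n).card : ℝ) *
        ∑ k ∈ Finset.Icc 1 (n / 2), ‖W‖ ^ (k - 1) * ‖W'‖ ^ (n / 2 - k) := by
  classical
  set B : ℝ := (∏ i, ‖v i‖) * ‖W - W'‖ *
      ∑ k ∈ Finset.Icc 1 (n / 2), ‖W‖ ^ (k - 1) * ‖W'‖ ^ (n / 2 - k) with hB
  have main : ∀ σ ∈ pairings n,
      ‖(∏ i ∈ Finset.univ.filter (fun i : Fin n => i < σ i), W (v i) (v (σ i)))
        - ∏ i ∈ Finset.univ.filter (fun i : Fin n => i < σ i), W' (v i) (v (σ i))‖ ≤ B := by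
    intro σ hσ
    rw [pairings, Finset.mem_filter] at hσ
    obtain ⟨-, hσ2, hfix⟩ := hσ
    have hinv : ∀ i, σ (σ i) = i := by
      intro i
      have := congrArg (fun τ : Equiv.Perm (Fin n) => τ i) hσ2
      simpa [Equiv.Perm.mul_apply] using this
    set S : Finset (Fin n) := Finset.univ.filter (fun i : Fin n => i < σ i) with hS
    set T : Finset (Fin n) := Finset.univ.filter (fun i : Fin n => σ i < i) with hT
    have himg : S.image σ = T := by
      ext j
      simp only [Finset.mem_image, hS, hT, Finset.mem_filter, Finset.mem_univ, true_and]
      constructor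
      · rintro ⟨i, hi, rfl⟩
        simpa [hinv i] using hi
      · intro hj
        exact ⟨σ j, by simpa [hinv j] using hj, hinv j⟩
    have hdisj : Disjoint S T := by
      rw [Finset.disjoint_left]
      intro i hi hi'
      simp only [hS, hT, Finset.mem_filter] at hi hi'
      exact absurd (lt_trans hi.2 hi'.2) (lt_irrefl i)
    have huniv : S ∪ T = Finset.univ := by
      ext i
      simp only [hS, hT, Finset.mem_union, Finset.mem_filter, Finset.mem_univ, true_and,
        iff_true]
      exact (lt_or_gt_of_ne (Ne.symm (hfix i))).imp (fun h => h) (fun h => h)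
    have hcardT : T.card = S.card := by
      rw [← himg, Finset.card_image_of_injective _ σ.injective]
    have hcard : S.card = n / 2 := by
      have h1 : S.card + T.card = n := by
        rw [← Finset.card_union_of_disjoint hdisj, huniv, Finset.card_univ, Fintype.card_fin]
      omega
    have hprod : ∏ i ∈ S, (‖v i‖ * ‖v (σ i)‖) = ∏ i, ‖v i‖ := by
      rw [Finset.prod_mul_distrib]
      have h2 : ∏ i ∈ S, ‖v (σ i)‖ = ∏ j ∈ T, ‖v j‖ := by
        rw [← himg, Finset.prod_image (fun a _ b _ h => σ.injective h)]
      rw [h2, ← Finset.prod_union hdisj, huniv]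
    have key := telescope S (fun i => W (v i) (v (σ i))) (fun i => W' (v i) (v (σ i)))
      (fun i => ‖v i‖ * ‖v (σ i)‖) ‖W‖ ‖W'‖ ‖W - W'‖ (norm_nonneg W) (norm_nonneg W')
      (norm_nonneg (W - W'))
      (fun i _ => mul_nonneg (norm_nonneg _) (norm_nonneg _))
      (fun i _ => by
        rw [← mul_assoc]
        exact ContinuousLinearMap.le_opNorm₂ W (v i) (v (σ i)))
      (fun i _ => by
        rw [← mul_assoc]
        exact ContinuousLinearMap.le_opNorm₂ W' (v i) (v (σ i)))
      (fun i _ => by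
        have : W (v i) (v (σ i)) - W' (v i) (v (σ i)) = (W - W') (v i) (v (σ i)) := by
          simp [ContinuousLinearMap.sub_apply]
        rw [this, ← mul_assoc]
        exact ContinuousLinearMap.le_opNorm₂ (W - W') (v i) (v (σ i)))
    rw [hprod, hcard] at key
    exact key
  have hsplit : qfFun W n v - qfFun W' n v =
      ∑ σ ∈ pairings n,
        ((∏ i ∈ Finset.univ.filter (fun i : Fin n => i < σ i), W (v i) (v (σ i)))
          - ∏ i ∈ Finset.univ.filter (fun i : Fin n => i < σ i), W' (v i) (v (σ i))) := by
    rw [qfFun, qfFun, Finset.sum_sub_distrib]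
  rw [hsplit]
  calc ‖∑ σ ∈ pairings n, _‖ ≤ ∑ σ ∈ pairings n, ‖_‖ :=
        norm_sum_le _ _
    _ ≤ ∑ _σ ∈ pairings n, B := Finset.sum_le_sum main
    _ = ((pairings n).card : ℝ) * B := by rw [Finset.sum_const, nsmul_eq_mul]
    _ = _ := by rw [hB]; ring
end

section
/- Let Λ be a set with a symmetric nonnegative distance function d, and let Y ⊆ Λ be a finite subset with |Y| ≥ 4. If for some r > 0 the spread satisfies Δ(Y) ≤ r while the 2-spread satisfies Δ₂(Y) > r, then there exist two distinct points x, y ∈ Y with d(x,y) ≤ r such that the set Z := Y ∖ {x,y} satisfies Δ(Z) ≤ r. -/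
open scoped BigOperators

/-- The distance `d(S,T) = min_{s∈S,t∈T} d(s,t)` between two (nonempty, finite) subsets,
realized as an infimum. -/
noncomputable def setDist {Λ : Type*} (d : Λ → Λ → ℝ) (S T : Finset Λ) : ℝ :=
  sInf {r : ℝ | ∃ s ∈ S, ∃ t ∈ T, r = d s t}

/-- The spread `Δ(Y) = max_{y∈Y} d(y, Y∖{y})`, realized as a supremum. -/
noncomputable def spread {Λ : Type*} [DecidableEq Λ] (d : Λ → Λ → ℝ) (Y : Finset Λ) : ℝ :=
  sSup {r : ℝ | ∃ y ∈ Y, r = setDist d {y} (Y.erase y)}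

/-- The 2-spread `Δ₂(Y) = max_{J ⊆ Y, |J| = 2} d(J, Y∖J)`. -/
noncomputable def spread2 {Λ : Type*} [DecidableEq Λ] (d : Λ → Λ → ℝ) (Y : Finset Λ) : ℝ :=
  sSup {r : ℝ | ∃ J : Finset Λ, J ⊆ Y ∧ J.card = 2 ∧ r = setDist d J (Y \ J)}

/-- `N(X,n,r)`: the number of `n`-element subsets `Y ⊆ X` with `Δ(Y) ≤ r`. -/
noncomputable def countSpread {Λ : Type*} [DecidableEq Λ] (d : Λ → Λ → ℝ)
    (X : Finset Λ) (n : ℕ) (r : ℝ) : ℕ :=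
  {Y : Finset Λ | Y ⊆ X ∧ Y.card = n ∧ spread d Y ≤ r}.ncard

/-- The sequence `q₂ = 1`, `q₃ = 2`, `q_{n+2} = (n+1)·q_{n+1} + q_n` (for `n ≥ 2`). -/
def qseq : ℕ → ℕ
  | 0 => 0
  | 1 => 0
  | 2 => 1
  | 3 => 2
  | (n + 4) => (n + 3) * qseq (n + 3) + qseq (n + 2)

section aux

variable {Λ : Type*} [DecidableEq Λ] (d : Λ → Λ → ℝ)

lemma setDistSet_finite (S T : Finset Λ) :
    {r : ℝ | ∃ s ∈ S, ∃ t ∈ T, r = d s t}.Finite := by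
  apply Set.Finite.subset (Finset.finite_toSet ((S ×ˢ T).image fun p => d p.1 p.2))
  rintro x ⟨s, hs, t, ht, rfl⟩
  simp only [Finset.coe_image, Set.mem_image, Finset.mem_coe, Finset.mem_product]
  exact ⟨(s, t), ⟨hs, ht⟩, rfl⟩

lemma setDist_le {S T : Finset Λ} {s t : Λ} (hs : s ∈ S) (ht : t ∈ T) :
    setDist d S T ≤ d s t :=
  csInf_le (setDistSet_finite d S T).bddBelow ⟨s, hs, t, ht, rfl⟩

lemma setDist_attained {S T : Finset Λ} (hS : S.Nonempty) (hT : T.Nonempty) :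
    ∃ s ∈ S, ∃ t ∈ T, setDist d S T = d s t := by
  obtain ⟨s, hs⟩ := hS; obtain ⟨t, ht⟩ := hT
  have hmem : setDist d S T ∈ {r : ℝ | ∃ s ∈ S, ∃ t ∈ T, r = d s t} :=
    Set.Nonempty.csInf_mem ⟨d s t, s, hs, t, ht, rfl⟩ (setDistSet_finite d S T)
  exact hmem

lemma spreadSet_finite (Y : Finset Λ) :
    {r : ℝ | ∃ y ∈ Y, r = setDist d {y} (Y.erase y)}.Finite := by
  apply Set.Finite.subset (Finset.finite_toSet (Y.image fun y => setDist d {y} (Y.erase y)))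
  rintro x ⟨y, hy, rfl⟩
  simp only [Finset.coe_image, Set.mem_image, Finset.mem_coe]
  exact ⟨y, hy, rfl⟩

lemma spread_le_of_mem {Y : Finset Λ} {y : Λ} (hy : y ∈ Y) :
    setDist d {y} (Y.erase y) ≤ spread d Y :=
  le_csSup (spreadSet_finite d Y).bddAbove ⟨y, hy, rfl⟩

lemma spread_le {Y : Finset Λ} {r : ℝ} (hne : Y.Nonempty)
    (h : ∀ y ∈ Y, setDist d {y} (Y.erase y) ≤ r) : spread d Y ≤ r := by
  apply csSup_le
  · obtain ⟨y, hy⟩ := hne; exact ⟨_, y, hy, rfl⟩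
  · rintro x ⟨y, hy, rfl⟩; exact h y hy

lemma spread2Set_finite (Y : Finset Λ) :
    {r : ℝ | ∃ J : Finset Λ, J ⊆ Y ∧ J.card = 2 ∧ r = setDist d J (Y \ J)}.Finite := by
  apply Set.Finite.subset (Finset.finite_toSet (Y.powerset.image fun J => setDist d J (Y \ J)))
  rintro x ⟨J, hJ, _, rfl⟩
  simp only [Finset.coe_image, Set.mem_image, Finset.mem_coe, Finset.mem_powerset]
  exact ⟨J, hJ, rfl⟩

end aux

theorem stmt2 {Λ : Type*} [DecidableEq Λ] (d : Λ → Λ → ℝ)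
    (hsym : ∀ x y, d x y = d y x) (hnonneg : ∀ x y, 0 ≤ d x y)
    (Y : Finset Λ) (hY : 4 ≤ Y.card) (r : ℝ) (hr : 0 < r)
    (h1 : spread d Y ≤ r) (h2 : r < spread2 d Y) :
    ∃ x ∈ Y, ∃ y ∈ Y, x ≠ y ∧ d x y ≤ r ∧ spread d (Y \ {x, y}) ≤ r := by
  -- The spread2 set is nonempty (else its sSup is 0 ≤ r).
  have hS2ne : {s : ℝ | ∃ J : Finset Λ, J ⊆ Y ∧ J.card = 2 ∧ s = setDist d J (Y \ J)}.Nonempty := by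
    by_contra hne
    rw [Set.not_nonempty_iff_eq_empty] at hne
    rw [spread2, hne, Real.sSup_empty] at h2
    linarith
  have hmem := Set.Nonempty.csSup_mem hS2ne (spread2Set_finite d Y)
  obtain ⟨J, hJY, hJ2, hJd⟩ := hmem
  have hJgt : r < setDist d J (Y \ J) := by rw [spread2] at h2; linarith [h2, hJd.symm.le]
  obtain ⟨x, y, hxy, hJeq⟩ := Finset.card_eq_two.mp hJ2
  have hxJ : x ∈ J := by rw [hJeq]; simp
  have hyJ : y ∈ J := by rw [hJeq]; simp
  have hxY : x ∈ Y := hJY hxJ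
  have hyY : y ∈ Y := hJY hyJ
  -- Key fact: distances from J to outside J exceed r.
  have keyA : ∀ s ∈ J, ∀ t ∈ Y, t ∉ J → r < d s t := fun s hs t htY htJ =>
    lt_of_lt_of_le hJgt (setDist_le d hs (Finset.mem_sdiff.mpr ⟨htY, htJ⟩))
  -- spread bound for each point of Y.
  have hspread : ∀ z ∈ Y, setDist d {z} (Y.erase z) ≤ r := fun z hz =>
    le_trans (spread_le_of_mem d hz) h1
  -- d x y ≤ r.
  have hcard_erase : ∀ z ∈ Y, (Y.erase z).Nonempty := by
    intro z hz
    rw [← Finset.card_pos, Finset.card_erase_of_mem hz]; omega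
  have hdxy : d x y ≤ r := by
    obtain ⟨s, hs, t, ht, heq⟩ :=
      setDist_attained d (Finset.singleton_nonempty x) (hcard_erase x hxY)
    rw [Finset.mem_singleton] at hs; rw [hs] at heq
    have htY : t ∈ Y := Finset.mem_of_mem_erase ht
    have htx : t ≠ x := Finset.ne_of_mem_erase ht
    have htJ : t ∈ J := by
      by_contra htJ
      have := keyA x hxJ t htY htJ
      have := hspread x hxY
      rw [heq] at this; linarith
    rw [hJeq, Finset.mem_insert, Finset.mem_singleton] at htJ
    rcases htJ with h | h
    · exact absurd h htx
    · subst h; rw [← heq]; exact hspread x hxY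
  refine ⟨x, hxY, y, hyY, hxy, hdxy, ?_⟩
  -- spread of Z := Y \ {x,y} ≤ r.
  have hZeq : Y \ {x, y} = Y \ J := by rw [hJeq]
  rw [hZeq]
  have hZcard : 2 ≤ (Y \ J).card := by
    rw [Finset.card_sdiff_of_subset hJY, hJ2]; omega
  have hZne : (Y \ J).Nonempty := by rw [← Finset.card_pos]; omega
  apply spread_le d hZne
  intro z hz
  obtain ⟨hzY, hzJ⟩ := Finset.mem_sdiff.mp hz
  obtain ⟨s, hs, w, hw, heq⟩ :=
    setDist_attained d (Finset.singleton_nonempty z) (hcard_erase z hzY)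
  rw [Finset.mem_singleton] at hs; rw [hs] at heq
  have hwY : w ∈ Y := Finset.mem_of_mem_erase hw
  have hwz : w ≠ z := Finset.ne_of_mem_erase hw
  have hdzw : d z w ≤ r := by rw [← heq]; exact hspread z hzY
  have hwJ : w ∉ J := by
    intro hwJ
    have := keyA w hwJ z hzY hzJ
    rw [hsym w z] at this; linarith
  have hwZ : w ∈ (Y \ J).erase z :=
    Finset.mem_erase.mpr ⟨hwz, Finset.mem_sdiff.mpr ⟨hwY, hwJ⟩⟩
  calc setDist d {z} ((Y \ J).erase z) ≤ d z w := setDist_le d (Finset.mem_singleton_self z) hwZ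
    _ ≤ r := hdzw
end

section
/- Let Λ be a set with a symmetric nonnegative distance function d, and let Y ⊆ Λ be a finite subset with |Y| ≥ 3. If for some r > 0 both Δ(Y) ≤ r and Δ₂(Y) ≤ r hold, then there exists a point x ∈ Y such that the set Z := Y ∖ {x} satisfies Δ(Z) ≤ r. -/
open scoped BigOperators

lemma setDist_le_mem {Λ : Type*} (d : Λ → Λ → ℝ) (hnn : ∀ x y, 0 ≤ d x y)
    {S T : Finset Λ} {s t : Λ} (hs : s ∈ S) (ht : t ∈ T) :
    setDist d S T ≤ d s t := by
  apply csInf_le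
  · exact ⟨0, by rintro x ⟨a, ha, b, hb, rfl⟩; exact hnn a b⟩
  · exact ⟨s, hs, t, ht, rfl⟩

lemma setDist_mem {Λ : Type*} (d : Λ → Λ → ℝ) {S T : Finset Λ}
    (hS : S.Nonempty) (hT : T.Nonempty) :
    ∃ s ∈ S, ∃ t ∈ T, setDist d S T = d s t := by
  have hfin : {r : ℝ | ∃ s ∈ S, ∃ t ∈ T, r = d s t}.Finite := by
    apply Set.Finite.subset (Set.Finite.image (fun p : Λ × Λ => d p.1 p.2)
      (Set.Finite.prod S.finite_toSet T.finite_toSet))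
    rintro x ⟨a, ha, b, hb, rfl⟩
    exact ⟨(a, b), ⟨ha, hb⟩, rfl⟩
  have hne : {r : ℝ | ∃ s ∈ S, ∃ t ∈ T, r = d s t}.Nonempty := by
    obtain ⟨s, hs⟩ := hS; obtain ⟨t, ht⟩ := hT
    exact ⟨d s t, s, hs, t, ht, rfl⟩
  exact hne.csInf_mem hfin

theorem stmt3 {Λ : Type*} [DecidableEq Λ] (d : Λ → Λ → ℝ)
    (hsym : ∀ x y, d x y = d y x) (hnonneg : ∀ x y, 0 ≤ d x y)
    (Y : Finset Λ) (hY : 3 ≤ Y.card) (r : ℝ) (hr : 0 < r)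
    (h1 : spread d Y ≤ r) (h2 : spread2 d Y ≤ r) :
    ∃ x ∈ Y, spread d (Y.erase x) ≤ r := by
  classical
  by_contra hcon
  push_neg at hcon
  have hYne : Y.Nonempty := Finset.card_pos.mp (by omega)
  -- Step 1: for each x ∈ Y there is y ≠ x in Y whose only r-neighbor in Y is x.
  have key : ∀ x ∈ Y, ∃ y, y ∈ Y ∧ y ≠ x ∧ d y x ≤ r ∧
      ∀ z ∈ Y, z ≠ x → z ≠ y → r < d y z := by
    intro x hx
    have hsp := hcon x hx
    have hex : ∃ y ∈ Y.erase x, r < setDist d {y} ((Y.erase x).erase y) := by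
      by_contra hno
      push_neg at hno
      have : spread d (Y.erase x) ≤ r := by
        apply Real.sSup_le
        · rintro v ⟨y, hy, rfl⟩
          exact hno y hy
        · exact hr.le
      linarith
    obtain ⟨y, hy, hgt⟩ := hex
    have hyY : y ∈ Y := Finset.mem_of_mem_erase hy
    have hyx : y ≠ x := Finset.ne_of_mem_erase hy
    have hfar : ∀ z ∈ Y, z ≠ x → z ≠ y → r < d y z := by
      intro z hz hzx hzy
      have hzmem : z ∈ (Y.erase x).erase y :=
        Finset.mem_erase.mpr ⟨hzy, Finset.mem_erase.mpr ⟨hzx, hz⟩⟩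
      have := setDist_le_mem d hnonneg (Finset.mem_singleton_self y) hzmem
      linarith
    refine ⟨y, hyY, hyx, ?_, hfar⟩
    -- from spread d Y ≤ r, y has some neighbor; it must be x.
    have hsd : setDist d {y} (Y.erase y) ≤ r := by
      have hmem : setDist d {y} (Y.erase y) ∈
          {v : ℝ | ∃ z ∈ Y, v = setDist d {z} (Y.erase z)} := ⟨y, hyY, rfl⟩
      have hbdd : BddAbove {v : ℝ | ∃ z ∈ Y, v = setDist d {z} (Y.erase z)} := by
        apply Set.Finite.bddAbove
        apply Set.Finite.subset
          (Set.Finite.image (fun z => setDist d {z} (Y.erase z)) Y.finite_toSet)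
        rintro v ⟨z, hz, rfl⟩; exact ⟨z, hz, rfl⟩
      exact le_trans (le_csSup hbdd hmem) h1
    have hxmem : x ∈ Y.erase y := Finset.mem_erase.mpr ⟨hyx.symm, hx⟩
    obtain ⟨s, hs, t, ht, heq⟩ :=
      setDist_mem d (Finset.singleton_nonempty y) ⟨x, hxmem⟩
    rw [Finset.mem_singleton] at hs
    rw [hs] at heq
    have htY : t ∈ Y := Finset.mem_of_mem_erase ht
    have hty : t ≠ y := Finset.ne_of_mem_erase ht
    by_cases htx : t = x
    · subst htx; rw [← heq]; exact hsd
    · exfalso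
      have := hfar t htY htx hty
      rw [← heq] at this
      linarith
  -- Step 2: the assignment x ↦ y_x is injective, hence surjective on Y.
  set F : ∀ a ∈ Y, Λ := fun a ha => (key a ha).choose with hF
  have hFspec : ∀ a (ha : a ∈ Y), (F a ha) ∈ Y ∧ (F a ha) ≠ a ∧ d (F a ha) a ≤ r ∧
      ∀ z ∈ Y, z ≠ a → z ≠ F a ha → r < d (F a ha) z := fun a ha => (key a ha).choose_spec
  have hFmem : ∀ a (ha : a ∈ Y), F a ha ∈ Y := fun a ha => (hFspec a ha).1
  have hFinj : ∀ a₁ a₂ (ha₁ : a₁ ∈ Y) (ha₂ : a₂ ∈ Y), F a₁ ha₁ = F a₂ ha₂ → a₁ = a₂ := by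
    intro a₁ a₂ ha₁ ha₂ heq
    by_contra hne
    have h1' := hFspec a₁ ha₁
    have h2' := hFspec a₂ ha₂
    have := h2'.2.2.2 a₁ ha₁ hne (by rw [← heq]; exact (Ne.symm h1'.2.1))
    rw [← heq] at this
    have := h1'.2.2.1
    linarith [hsym (F a₁ ha₁) a₁]
  have hsurj := Finset.surj_on_of_inj_on_of_card_le F hFmem hFinj le_rfl
  -- Step 3: derive a contradiction using spread2.
  obtain ⟨a, ha⟩ := hYne
  set b := F a ha with hb
  have hbY : b ∈ Y := hFmem a ha
  have hba : b ≠ a := (hFspec a ha).2.1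
  have hJcard : ({a, b} : Finset Λ).card = 2 := Finset.card_pair (Ne.symm hba)
  have hJsub : ({a, b} : Finset Λ) ⊆ Y := by
    intro z hz
    rcases Finset.mem_insert.mp hz with rfl | hz
    · exact ha
    · rw [Finset.mem_singleton] at hz; subst hz; exact hbY
  have hsd2 : setDist d {a, b} (Y \ {a, b}) ≤ r := by
    have hmem : setDist d {a, b} (Y \ {a, b}) ∈
        {v : ℝ | ∃ J : Finset Λ, J ⊆ Y ∧ J.card = 2 ∧ v = setDist d J (Y \ J)} :=
      ⟨{a, b}, hJsub, hJcard, rfl⟩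
    have hbdd : BddAbove
        {v : ℝ | ∃ J : Finset Λ, J ⊆ Y ∧ J.card = 2 ∧ v = setDist d J (Y \ J)} := by
      apply Set.Finite.bddAbove
      apply Set.Finite.subset
        (Set.Finite.image (fun J : Finset Λ => setDist d J (Y \ J))
          Y.powerset.finite_toSet)
      rintro v ⟨J, hJ, _, rfl⟩
      exact ⟨J, by simpa [Finset.mem_powerset] using hJ, rfl⟩
    exact le_trans (le_csSup hbdd hmem) h2
  have hcompl : (Y \ ({a, b} : Finset Λ)).Nonempty := by
    rw [← Finset.card_pos, Finset.card_sdiff_of_subset hJsub, hJcard]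
    omega
  obtain ⟨s, hs, t, ht, heq⟩ :=
    setDist_mem d ⟨a, Finset.mem_insert_self a {b}⟩ hcompl
  rw [Finset.mem_sdiff] at ht
  obtain ⟨htY, htJ⟩ := ht
  have hta : t ≠ a := fun h => htJ (by rw [h]; exact Finset.mem_insert_self a {b})
  have htb : t ≠ b := fun h => htJ (by rw [h]; exact Finset.mem_insert_of_mem (Finset.mem_singleton_self b))
  have hdst : d s t ≤ r := by rw [← heq]; exact hsd2
  rcases Finset.mem_insert.mp hs with rfl | hs
  · -- s = a : then t has an r-neighbor a, but t = F s' for some s', forcing s' = a, t = b.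
    obtain ⟨s', hs', ht'⟩ := hsurj t htY
    have hspec := hFspec s' hs'
    rw [← ht'] at hspec
    by_cases has' : s = s'
    · subst has'
      exact htb ht'
    · have := hspec.2.2.2 s ha has' (Ne.symm hta)
      rw [hsym t s] at this
      linarith
  · rw [Finset.mem_singleton] at hs
    subst hs
    have := (hFspec a ha).2.2.2 t htY hta htb
    linarith
end

section
/- Let Λ be a set with a symmetric nonnegative distance function d, let X ⊆ Λ be finite, let r > 0, and let N_r ∈ ℕ be such that for every x ∈ X the set {y ∈ X : d(x,y) ≤ r} has at most N_r elements. Let (q_n)_{n≥2} be the sequence of natural numbers determined by q₂ = 1, q₃ = 2 and q_{n+2} = (n+1)·q_{n+1} + q_n for n ≥ 2. Then for every n ≥ 2, the number N(X,n,r) of n-element subsets Y ⊆ X with Δ(Y) ≤ r satisfies N(X,n,r) ≤ q_n · (|X| · N_r)^{n/2} (the right-hand side being a real number, with real exponent n/2). -/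
open scoped BigOperators

section Aux

open scoped Classical
set_option linter.unusedSectionVars false

variable {Λ : Type*} [DecidableEq Λ] (d : Λ → Λ → ℝ) (r : ℝ)

/-- "good" = no isolated vertex in the graph `d ≤ r`. -/
def Good (Y : Finset Λ) : Prop := ∀ u ∈ Y, ∃ v ∈ Y, v ≠ u ∧ d u v ≤ r

noncomputable def Fset (X : Finset Λ) (n : ℕ) : Finset (Finset Λ) :=
  (X.powersetCard n).filter (Good d r)

noncomputable def ballF (X : Finset Λ) (v : Λ) : Finset Λ :=
  X.filter (fun y => d v y ≤ r)

lemma mem_Fset {X : Finset Λ} {n : ℕ} {Y : Finset Λ} :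
    Y ∈ Fset d r X n ↔ Y ⊆ X ∧ Y.card = n ∧ Good d r Y := by
  simp [Fset, Finset.mem_powersetCard, and_assoc]

lemma good_of_spread_le {Y : Finset Λ} (hcard : 2 ≤ Y.card) (h : spread d Y ≤ r) :
    Good d r Y := by
  intro y hy
  have herase : (Y.erase y).Nonempty := by
    rw [← Finset.card_pos, Finset.card_erase_of_mem hy]; omega
  have hA : {r' : ℝ | ∃ y' ∈ Y, r' = setDist d {y'} (Y.erase y')}
      = (fun y' => setDist d {y'} (Y.erase y')) '' ↑Y := by
    ext x; simp [eq_comm]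
  have hAfin : {r' : ℝ | ∃ y' ∈ Y, r' = setDist d {y'} (Y.erase y')}.Finite := by
    rw [hA]; exact Y.finite_toSet.image _
  have h1 : setDist d {y} (Y.erase y) ≤ spread d Y :=
    le_csSup hAfin.bddAbove ⟨y, hy, rfl⟩
  have h2 : setDist d {y} (Y.erase y) ≤ r := h1.trans h
  have hT : {r' : ℝ | ∃ s ∈ ({y} : Finset Λ), ∃ t ∈ Y.erase y, r' = d s t}
      = (fun t => d y t) '' ↑(Y.erase y) := by
    ext x; simp [eq_comm]; tauto
  have hTne : ((fun t => d y t) '' ↑(Y.erase y)).Nonempty :=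
    Set.Nonempty.image _ (by exact_mod_cast herase)
  have hTfin : ((fun t => d y t) '' ↑(Y.erase y)).Finite :=
    (Y.erase y).finite_toSet.image _
  have hmem := hTne.csInf_mem hTfin
  obtain ⟨t, ht, hdt⟩ := hmem
  have ht' : t ∈ Y.erase y := by exact_mod_cast ht
  refine ⟨t, Finset.mem_of_mem_erase ht', Finset.ne_of_mem_erase ht', ?_⟩
  have : setDist d {y} (Y.erase y) = d y t := by
    rw [setDist, hT, ← hdt]
  linarith [h2, this.symm.le]

lemma countSpread_le_Fset (X : Finset Λ) {n : ℕ} (hn : 2 ≤ n) :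
    countSpread d X n r ≤ (Fset d r X n).card := by
  have hsub : {Y : Finset Λ | Y ⊆ X ∧ Y.card = n ∧ spread d Y ≤ r} ⊆ ↑(Fset d r X n) := by
    intro Y hY
    obtain ⟨h1, h2, h3⟩ := hY
    simp only [Finset.coe_filter, Fset, Set.mem_setOf_eq, Finset.mem_powersetCard]
    exact ⟨⟨h1, h2⟩, good_of_spread_le d r (h2 ▸ hn) h3⟩
  calc countSpread d X n r ≤ (↑(Fset d r X n) : Set (Finset Λ)).ncard :=
        Set.ncard_le_ncard hsub (Fset d r X n).finite_toSet
    _ = (Fset d r X n).card := Set.ncard_coe_finset _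

lemma card_ballF_le {X : Finset Λ} {Nr : ℕ}
    (hN : ∀ x ∈ X, ({y | y ∈ X ∧ d x y ≤ r} : Set Λ).ncard ≤ Nr)
    {v : Λ} (hv : v ∈ X) : (ballF d r X v).card ≤ Nr := by
  have : ({y | y ∈ X ∧ d v y ≤ r} : Set Λ) = ↑(ballF d r X v) := by
    ext y; simp [ballF]
  have := hN v hv
  rwa [‹({y | y ∈ X ∧ d v y ≤ r} : Set Λ) = _›, Set.ncard_coe_finset] at this

lemma card_Fset_two (hsym : ∀ x y, d x y = d y x) (X : Finset Λ) {Nr : ℕ}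
    (hN : ∀ x ∈ X, ({y | y ∈ X ∧ d x y ≤ r} : Set Λ).ncard ≤ Nr) :
    (Fset d r X 2).card ≤ X.card * Nr := by
  have hsub : Fset d r X 2 ⊆
      X.biUnion (fun v => (ballF d r X v).image (fun y => ({v, y} : Finset Λ))) := by
    intro Y hY
    rw [mem_Fset] at hY
    obtain ⟨hYX, hcard, hgood⟩ := hY
    obtain ⟨a, b, hab, hYab⟩ := Finset.card_eq_two.mp hcard
    obtain ⟨v, hv, hvne, hdv⟩ := hgood a (by simp [hYab])
    have hvb : v = b := by
      rcases (by simpa [hYab] using hv) with h | h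
      · exact absurd h hvne
      · exact h
    rw [hvb] at hdv
    simp only [Finset.mem_biUnion, Finset.mem_image]
    exact ⟨a, hYX (by simp [hYab]), b, by simp [ballF, hYX (by simp [hYab] : b ∈ Y), hdv],
      hYab.symm⟩
  calc (Fset d r X 2).card ≤ _ := Finset.card_le_card hsub
    _ ≤ ∑ v ∈ X, ((ballF d r X v).image (fun y => ({v, y} : Finset Λ))).card :=
        Finset.card_biUnion_le
    _ ≤ ∑ v ∈ X, Nr := Finset.sum_le_sum (fun v hv =>
        (Finset.card_image_le).trans (card_ballF_le d r hN hv))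
    _ = X.card * Nr := by simp [Finset.sum_const, mul_comm]

lemma card_Fset_three (hsym : ∀ x y, d x y = d y x) (X : Finset Λ) {Nr : ℕ}
    (hN : ∀ x ∈ X, ({y | y ∈ X ∧ d x y ≤ r} : Set Λ).ncard ≤ Nr) :
    (Fset d r X 3).card ≤ X.card * (Nr * Nr) := by
  have hsub : Fset d r X 3 ⊆
      X.biUnion (fun v => ((ballF d r X v) ×ˢ (ballF d r X v)).image
        (fun p => ({v, p.1, p.2} : Finset Λ))) := by
    intro Y hY
    rw [mem_Fset] at hY
    obtain ⟨hYX, hcard, hgood⟩ := hY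
    obtain ⟨a, b, c, hab, hac, hbc, hYabc⟩ := Finset.card_eq_three.mp hcard
    have haY : a ∈ Y := by simp [hYabc]
    have hbY : b ∈ Y := by simp [hYabc]
    have hcY : c ∈ Y := by simp [hYabc]
    have hmemball : ∀ u v, u ∈ Y → v ∈ Y → d u v ≤ r → v ∈ ballF d r X u := by
      intro u v hu hv hd; simp [ballF, hYX hv, hd]
    -- find a center v with two neighbors p q and Y = {v,p,q}
    have key : ∃ v p q, v ∈ X ∧ p ∈ ballF d r X v ∧ q ∈ ballF d r X v ∧
        Y = {v, p, q} := by
      obtain ⟨na, hnaY, hnane, hdna⟩ := hgood a haY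
      rcases (by simpa [hYabc] using hnaY) with h | h | h
      · exact absurd h hnane
      · -- na = b : pair (a,b); third vertex c
        rw [h] at hdna
        obtain ⟨nc, hncY, hncne, hdnc⟩ := hgood c hcY
        rcases (by simpa [hYabc] using hncY) with h2 | h2 | h2
        · rw [h2] at hdnc
          exact ⟨a, b, c, hYX haY, hmemball a b haY hbY hdna,
            hmemball a c haY hcY (by rw [hsym]; exact hdnc), hYabc⟩
        · rw [h2] at hdnc
          refine ⟨b, a, c, hYX hbY, hmemball b a hbY haY (by rw [hsym]; exact hdna),
            hmemball b c hbY hcY (by rw [hsym]; exact hdnc), ?_⟩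
          rw [hYabc]; ext x; simp; tauto
        · exact absurd h2 hncne
      · -- na = c : pair (a,c); third vertex b
        rw [h] at hdna
        obtain ⟨nb, hnbY, hnbne, hdnb⟩ := hgood b hbY
        rcases (by simpa [hYabc] using hnbY) with h2 | h2 | h2
        · rw [h2] at hdnb
          refine ⟨a, c, b, hYX haY, hmemball a c haY hcY hdna,
            hmemball a b haY hbY (by rw [hsym]; exact hdnb), ?_⟩
          rw [hYabc]; ext x; simp; tauto
        · exact absurd h2 hnbne
        · rw [h2] at hdnb
          refine ⟨c, a, b, hYX hcY, hmemball c a hcY haY (by rw [hsym]; exact hdna),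
            hmemball c b hcY hbY (by rw [hsym]; exact hdnb), ?_⟩
          rw [hYabc]; ext x; simp; tauto
    obtain ⟨v, p, q, hvX, hp, hq, hYeq⟩ := key
    simp only [Finset.mem_biUnion, Finset.mem_image]
    exact ⟨v, hvX, (p, q), Finset.mem_product.mpr ⟨hp, hq⟩, hYeq.symm⟩
  calc (Fset d r X 3).card ≤ _ := Finset.card_le_card hsub
    _ ≤ ∑ v ∈ X, (((ballF d r X v) ×ˢ (ballF d r X v)).image
          (fun p => ({v, p.1, p.2} : Finset Λ))).card := Finset.card_biUnion_le
    _ ≤ ∑ v ∈ X, Nr * Nr := by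
        refine Finset.sum_le_sum (fun v hv => ?_)
        refine Finset.card_image_le.trans ?_
        rw [Finset.card_product]
        exact Nat.mul_le_mul (card_ballF_le d r hN hv) (card_ballF_le d r hN hv)
    _ = X.card * (Nr * Nr) := by simp [Finset.sum_const, mul_comm]

/-- Matching lemma: if `Y` is good but no single-vertex deletion is good, then every
vertex has a unique neighbour and they pair up; deleting such a pair keeps goodness. -/
lemma matching_step (hsym : ∀ x y, d x y = d y x) {Y : Finset Λ}
    (hgood : Good d r Y) (hne : ∀ y ∈ Y, ¬ Good d r (Y.erase y)) :
    ∀ y ∈ Y, ∃ z ∈ Y, z ≠ y ∧ d y z ≤ r ∧ Good d r ((Y.erase y).erase z) := by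
  -- step (*)
  have star : ∀ y ∈ Y, ∃ w ∈ Y, w ≠ y ∧ d w y ≤ r ∧
      ∀ v ∈ Y, v ≠ w → d w v ≤ r → v = y := by
    intro y hy
    have := hne y hy
    rw [Good] at this
    push_neg at this
    obtain ⟨w, hw, hwprop⟩ := this
    have hwY : w ∈ Y := Finset.mem_of_mem_erase hw
    have hwy : w ≠ y := Finset.ne_of_mem_erase hw
    obtain ⟨v, hvY, hvw, hdwv⟩ := hgood w hwY
    have huniq : ∀ v' ∈ Y, v' ≠ w → d w v' ≤ r → v' = y := by
      intro v' hv' hv'w hd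
      by_contra hv'y
      exact absurd hd (not_le.mpr (hwprop v' (Finset.mem_erase.mpr ⟨hv'y, hv'⟩) hv'w))
    have hvy : v = y := huniq v hvY hvw hdwv
    exact ⟨w, hwY, hwy, hvy ▸ hdwv, huniq⟩
  intro y hy
  obtain ⟨z, hzY, hzy, hdzy, huniqz⟩ := star y hy
  obtain ⟨u, huY, huz, hduz, huniqu⟩ := star z hzY
  have huy : u = y := huniqz u huY huz (by rw [hsym]; exact hduz)
  rw [huy] at huniqu
  refine ⟨z, hzY, hzy, by rw [hsym]; exact hdzy, ?_⟩
  intro w hw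
  have hwz : w ≠ z := Finset.ne_of_mem_erase hw
  have hwY' : w ∈ Y.erase y := Finset.mem_of_mem_erase hw
  have hwy : w ≠ y := Finset.ne_of_mem_erase hwY'
  have hwY : w ∈ Y := Finset.mem_of_mem_erase hwY'
  obtain ⟨v, hvY, hvw, hdwv⟩ := hgood w hwY
  have hvy : v ≠ y := by
    intro h; rw [h] at hdwv
    exact hwz (huniqu w hwY hwy (by rw [hsym]; exact hdwv))
  have hvz : v ≠ z := by
    intro h; rw [h] at hdwv
    exact hwy (huniqz w hwY hwz (by rw [hsym]; exact hdwv))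
  exact ⟨v, Finset.mem_erase.mpr ⟨hvz, Finset.mem_erase.mpr ⟨hvy, hvY⟩⟩, hvw, hdwv⟩

lemma card_Fset_step (hsym : ∀ x y, d x y = d y x) (X : Finset Λ) {Nr : ℕ}
    (hN : ∀ x ∈ X, ({y | y ∈ X ∧ d x y ≤ r} : Set Λ).ncard ≤ Nr) (n : ℕ) :
    (Fset d r X (n + 2)).card ≤
      (n + 1) * Nr * (Fset d r X (n + 1)).card + X.card * Nr * (Fset d r X n).card := by
  set F1 := (Fset d r X (n + 2)).filter (fun Y => ∃ y ∈ Y, Y.erase y ∈ Fset d r X (n + 1))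
    with hF1
  set F2 := (Fset d r X (n + 2)).filter
    (fun Y => ¬ ∃ y ∈ Y, Y.erase y ∈ Fset d r X (n + 1)) with hF2
  have hsplit : F1.card + F2.card = (Fset d r X (n + 2)).card :=
    Finset.card_filter_add_card_filter_not _
  -- bound F1
  have hb1 : F1.card ≤ (n + 1) * Nr * (Fset d r X (n + 1)).card := by
    have hsub : F1 ⊆ (Fset d r X (n + 1)).biUnion
        (fun Y' => (Y'.biUnion (ballF d r X)).image (fun y => insert y Y')) := by
      intro Y hY
      rw [hF1, Finset.mem_filter] at hY
      obtain ⟨hYF, y, hy, hYe⟩ := hY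
      rw [mem_Fset] at hYF
      obtain ⟨hYX, hYcard, hYgood⟩ := hYF
      obtain ⟨v, hvY, hvy, hdyv⟩ := hYgood y hy
      simp only [Finset.mem_biUnion, Finset.mem_image]
      refine ⟨Y.erase y, hYe, y, ?_, Finset.insert_erase hy⟩
      refine ⟨v, Finset.mem_erase.mpr ⟨hvy, hvY⟩, ?_⟩
      simp only [ballF, Finset.mem_filter]
      exact ⟨hYX hy, by rw [hsym]; exact hdyv⟩
    refine (Finset.card_le_card hsub).trans ?_
    calc ((Fset d r X (n + 1)).biUnion
          (fun Y' => (Y'.biUnion (ballF d r X)).image (fun y => insert y Y'))).card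
        ≤ ∑ Y' ∈ Fset d r X (n + 1),
            ((Y'.biUnion (ballF d r X)).image (fun y => insert y Y')).card :=
          Finset.card_biUnion_le
      _ ≤ ∑ _Y' ∈ Fset d r X (n + 1), (n + 1) * Nr := by
          refine Finset.sum_le_sum (fun Y' hY' => ?_)
          refine Finset.card_image_le.trans ?_
          refine Finset.card_biUnion_le.trans ?_
          have hY'X : Y' ⊆ X := ((mem_Fset d r).mp hY').1
          have hY'card : Y'.card = n + 1 := ((mem_Fset d r).mp hY').2.1
          calc ∑ v ∈ Y', (ballF d r X v).card ≤ ∑ _v ∈ Y', Nr :=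
                Finset.sum_le_sum (fun v hv => card_ballF_le d r hN (hY'X hv))
            _ = (n + 1) * Nr := by rw [Finset.sum_const, hY'card, smul_eq_mul]
      _ = (n + 1) * Nr * (Fset d r X (n + 1)).card := by
          rw [Finset.sum_const, smul_eq_mul, mul_comm]
  -- bound F2
  have hb2 : F2.card ≤ X.card * Nr * (Fset d r X n).card := by
    have hsub : F2 ⊆ X.biUnion (fun y => (ballF d r X y).biUnion
        (fun z => (Fset d r X n).image (fun Y'' => insert y (insert z Y'')))) := by
      intro Y hY
      rw [hF2, Finset.mem_filter] at hY
      obtain ⟨hYF, hnotex⟩ := hY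
      rw [mem_Fset] at hYF
      obtain ⟨hYX, hYcard, hYgood⟩ := hYF
      have hne : ∀ y ∈ Y, ¬ Good d r (Y.erase y) := by
        intro y hy hgoode
        exact hnotex ⟨y, hy, (mem_Fset d r).mpr ⟨(Y.erase_subset y).trans hYX,
          by rw [Finset.card_erase_of_mem hy, hYcard]; omega, hgoode⟩⟩
      have hYne : Y.Nonempty := Finset.card_pos.mp (by omega)
      obtain ⟨y, hy⟩ := hYne
      obtain ⟨z, hzY, hzy, hdyz, hgood''⟩ := matching_step d r hsym hYgood hne y hy
      have hz' : z ∈ Y.erase y := Finset.mem_erase.mpr ⟨hzy, hzY⟩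
      have hY''card : ((Y.erase y).erase z).card = n := by
        rw [Finset.card_erase_of_mem hz', Finset.card_erase_of_mem hy, hYcard]
        omega
      simp only [Finset.mem_biUnion, Finset.mem_image]
      refine ⟨y, hYX hy, z, ?_, (Y.erase y).erase z, (mem_Fset d r).mpr
        ⟨((Y.erase y).erase_subset z).trans ((Y.erase_subset y).trans hYX),
          hY''card, hgood''⟩, ?_⟩
      · simp only [ballF, Finset.mem_filter]
        exact ⟨hYX hzY, hdyz⟩
      · rw [Finset.insert_erase hz', Finset.insert_erase hy]
    refine (Finset.card_le_card hsub).trans ?_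
    calc (X.biUnion (fun y => (ballF d r X y).biUnion
          (fun z => (Fset d r X n).image (fun Y'' => insert y (insert z Y''))))).card
        ≤ ∑ y ∈ X, ((ballF d r X y).biUnion
            (fun z => (Fset d r X n).image (fun Y'' => insert y (insert z Y'')))).card :=
          Finset.card_biUnion_le
      _ ≤ ∑ y ∈ X, Nr * (Fset d r X n).card := by
          refine Finset.sum_le_sum (fun y hy => ?_)
          refine Finset.card_biUnion_le.trans ?_
          calc ∑ z ∈ ballF d r X y,
                ((Fset d r X n).image (fun Y'' => insert y (insert z Y''))).card
              ≤ ∑ _z ∈ ballF d r X y, (Fset d r X n).card :=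
                Finset.sum_le_sum (fun z hz => Finset.card_image_le)
            _ = (ballF d r X y).card * (Fset d r X n).card := by
                rw [Finset.sum_const, smul_eq_mul]
            _ ≤ Nr * (Fset d r X n).card :=
                Nat.mul_le_mul_right _ (card_ballF_le d r hN hy)
      _ = X.card * Nr * (Fset d r X n).card := by
          rw [Finset.sum_const, smul_eq_mul, mul_assoc]
  omega

end Aux

lemma Fset_eq_empty_of_Nr_zero {Λ : Type*} [DecidableEq Λ] (d : Λ → Λ → ℝ) (r : ℝ)
    (X : Finset Λ)
    (hN : ∀ x ∈ X, ({y | y ∈ X ∧ d x y ≤ r} : Set Λ).ncard ≤ 0)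
    {n : ℕ} (hn : 2 ≤ n) : Fset d r X n = ∅ := by
  classical
  rw [Finset.eq_empty_iff_forall_notMem]
  intro Y hY
  rw [mem_Fset] at hY
  obtain ⟨hYX, hYcard, hYgood⟩ := hY
  obtain ⟨y, hy⟩ := Finset.card_pos.mp (show 0 < Y.card by omega)
  obtain ⟨v, hvY, hvy, hdyv⟩ := hYgood y hy
  have hball : v ∈ ballF d r X y := by
    simp only [ballF, Finset.mem_filter]; exact ⟨hYX hvY, hdyv⟩
  have := card_ballF_le d r hN (hYX hy)
  rw [Nat.le_zero, Finset.card_eq_zero] at this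
  rw [this] at hball
  exact absurd hball (Finset.notMem_empty v)

lemma one_le_qseq : ∀ n, 2 ≤ n → 1 ≤ qseq n
  | 2, _ => le_refl 1
  | 3, _ => by norm_num [qseq]
  | (k + 4), _ => by
      have := one_le_qseq (k + 2) (by omega)
      rw [qseq]
      nlinarith [Nat.zero_le (qseq (k + 3))]

theorem stmt4 {Λ : Type*} [DecidableEq Λ] (d : Λ → Λ → ℝ)
    (hsym : ∀ x y, d x y = d y x) (hnonneg : ∀ x y, 0 ≤ d x y)
    (X : Finset Λ) (r : ℝ) (hr : 0 < r) (Nr : ℕ)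
    (hN : ∀ x ∈ X, ({y | y ∈ X ∧ d x y ≤ r} : Set Λ).ncard ≤ Nr)
    (n : ℕ) (hn : 2 ≤ n) :
    (countSpread d X n r : ℝ) ≤ (qseq n : ℝ) * ((X.card : ℝ) * (Nr : ℝ)) ^ ((n : ℝ) / 2) := by
  classical
  have hcs := countSpread_le_Fset d r X hn
  have hq1 : (1 : ℝ) ≤ (qseq n : ℝ) := by exact_mod_cast one_le_qseq n hn
  have hm0 : (0 : ℝ) ≤ (X.card : ℝ) := by positivity
  have hNr0 : (0 : ℝ) ≤ (Nr : ℝ) := by positivity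
  suffices h : ((Fset d r X n).card : ℝ) ≤ (qseq n : ℝ) * ((X.card : ℝ) * (Nr : ℝ)) ^ ((n : ℝ) / 2) by
    exact le_trans (by exact_mod_cast hcs) h
  by_cases hle : X.card ≤ Nr
  · -- trivial bound through the binomial coefficient
    have h1 : (Fset d r X n).card ≤ (X.powersetCard n).card :=
      Finset.card_le_card (Finset.filter_subset _ _)
    have h2 : (Fset d r X n).card ≤ X.card ^ n := by
      rw [Finset.card_powersetCard] at h1
      exact h1.trans (Nat.choose_le_pow _ _)
    have h3 : ((Fset d r X n).card : ℝ) ≤ ((X.card : ℝ)) ^ (n : ℕ) := by exact_mod_cast h2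
    have h4 : ((X.card : ℝ) * (X.card : ℝ)) ^ ((n : ℝ) / 2) = ((X.card : ℝ)) ^ (n : ℕ) := by
      rw [show (X.card : ℝ) * (X.card : ℝ) = ((X.card : ℝ)) ^ (2 : ℕ) by ring,
        ← Real.rpow_natCast (X.card : ℝ) 2, ← Real.rpow_mul hm0,
        ← Real.rpow_natCast (X.card : ℝ) n]
      norm_num
      rw [show (2 : ℝ) * ((n : ℝ) / 2) = (n : ℝ) by ring, Real.rpow_natCast]
    have h5 : ((X.card : ℝ) * (X.card : ℝ)) ^ ((n : ℝ) / 2)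
        ≤ ((X.card : ℝ) * (Nr : ℝ)) ^ ((n : ℝ) / 2) := by
      apply Real.rpow_le_rpow (by positivity)
      · exact mul_le_mul_of_nonneg_left (by exact_mod_cast hle) hm0
      · positivity
    calc ((Fset d r X n).card : ℝ) ≤ _ := h3
      _ = _ := h4.symm
      _ ≤ _ := h5
      _ ≤ (qseq n : ℝ) * ((X.card : ℝ) * (Nr : ℝ)) ^ ((n : ℝ) / 2) := by
        nlinarith [Real.rpow_nonneg (mul_nonneg hm0 hNr0) ((n : ℝ) / 2)]
  · push_neg at hle
    by_cases hNrz : Nr = 0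
    · subst hNrz
      rw [Fset_eq_empty_of_Nr_zero d r X (by exact_mod_cast hN) hn]
      simp only [Finset.card_empty, Nat.cast_zero]
      positivity
    set M : ℝ := (X.card : ℝ) * (Nr : ℝ) with hM
    have hMpos : 0 < M := by
      have h1 : 0 < Nr := Nat.pos_of_ne_zero hNrz
      have h2 : 0 < X.card := lt_trans h1 hle
      positivity
    set s : ℝ := M ^ ((1 : ℝ) / 2) with hs
    have hs0 : 0 ≤ s := Real.rpow_nonneg hMpos.le _
    have hss : s * s = M := by
      rw [hs, ← Real.rpow_add hMpos]
      norm_num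
    have hDs : (Nr : ℝ) ≤ s := by
      have hDM : (Nr : ℝ) * (Nr : ℝ) ≤ M := by
        rw [hM]
        have : (Nr : ℝ) ≤ (X.card : ℝ) := by exact_mod_cast hle.le
        nlinarith
      nlinarith
    -- strong induction
    have key : ∀ k, 2 ≤ k → ((Fset d r X k).card : ℝ) ≤ (qseq k : ℝ) * M ^ ((k : ℝ) / 2) := by
      intro k
      induction k using Nat.strong_induction_on with
      | _ k ih =>
        intro hk
        rcases (show k = 2 ∨ k = 3 ∨ 4 ≤ k by omega) with h2 | h3 | hge4
        · subst h2
          have hb : ((Fset d r X 2).card : ℝ) ≤ (X.card : ℝ) * (Nr : ℝ) := by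
            exact_mod_cast card_Fset_two d r hsym X hN
          calc ((Fset d r X 2).card : ℝ) ≤ M := by rw [hM]; exact hb
            _ = (qseq 2 : ℝ) * M ^ ((2 : ℝ) / 2) := by
              norm_num [qseq, Real.rpow_one]
        · subst h3
          have hb : ((Fset d r X 3).card : ℝ) ≤ (X.card : ℝ) * ((Nr : ℝ) * (Nr : ℝ)) := by
            exact_mod_cast card_Fset_three d r hsym X hN
          have h32 : M ^ ((3 : ℝ) / 2) = M * s := by
            rw [show (3 : ℝ) / 2 = 1 + 1 / 2 by norm_num, Real.rpow_add hMpos, Real.rpow_one, hs]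
          calc ((Fset d r X 3).card : ℝ) ≤ (X.card : ℝ) * ((Nr : ℝ) * (Nr : ℝ)) := hb
            _ = M * (Nr : ℝ) := by rw [hM]; ring
            _ ≤ M * s := mul_le_mul_of_nonneg_left hDs hMpos.le
            _ = M ^ ((3 : ℝ) / 2) := h32.symm
            _ ≤ (qseq 3 : ℝ) * M ^ ((3 : ℝ) / 2) := by
              rw [show qseq 3 = 2 from rfl]
              nlinarith [Real.rpow_nonneg hMpos.le ((3 : ℝ) / 2)]
        · obtain ⟨j, hj⟩ : ∃ j, k = j + 4 := ⟨k - 4, by omega⟩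
          subst hj
          have hstep := card_Fset_step d r hsym X hN (j + 2)
          have hstep' : (Fset d r X (j + 4)).card ≤
              (j + 3) * Nr * (Fset d r X (j + 3)).card
                + X.card * Nr * (Fset d r X (j + 2)).card := by
            have e : j + 2 + 2 = j + 4 := by omega
            have e' : j + 2 + 1 = j + 3 := by omega
            rw [e, e'] at hstep
            exact hstep
          have ih3 := ih (j + 3) (by omega) (by omega)
          have ih2 := ih (j + 2) (by omega) (by omega)
          rw [show ((j + 3 : ℕ) : ℝ) / 2 = ((j : ℝ) + 3) / 2 by push_cast; ring] at ih3
          rw [show ((j + 2 : ℕ) : ℝ) / 2 = ((j : ℝ) + 2) / 2 by push_cast; ring] at ih2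
          rw [show ((j + 4 : ℕ) : ℝ) / 2 = ((j : ℝ) + 4) / 2 by push_cast; ring]
          have e1 : M ^ (((j : ℝ) + 4) / 2) = s * M ^ (((j : ℝ) + 3) / 2) := by
            rw [show ((j : ℝ) + 4) / 2 = 1 / 2 + ((j : ℝ) + 3) / 2 by ring,
              Real.rpow_add hMpos, hs]
          have e2 : M ^ (((j : ℝ) + 4) / 2) = M * M ^ (((j : ℝ) + 2) / 2) := by
            rw [show ((j : ℝ) + 4) / 2 = 1 + ((j : ℝ) + 2) / 2 by ring,
              Real.rpow_add hMpos, Real.rpow_one]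
          have hq : (qseq (j + 4) : ℝ)
              = ((j : ℝ) + 3) * (qseq (j + 3) : ℝ) + (qseq (j + 2) : ℝ) := by
            rw [qseq]; push_cast; ring
          have hcast : ((Fset d r X (j + 4)).card : ℝ) ≤
              ((j : ℝ) + 3) * (Nr : ℝ) * ((Fset d r X (j + 3)).card : ℝ)
                + (X.card : ℝ) * (Nr : ℝ) * ((Fset d r X (j + 2)).card : ℝ) := by
            have := hstep'
            push_cast
            exact_mod_cast this
          calc ((Fset d r X (j + 4)).card : ℝ)
              ≤ ((j : ℝ) + 3) * (Nr : ℝ) * ((Fset d r X (j + 3)).card : ℝ)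
                + (X.card : ℝ) * (Nr : ℝ) * ((Fset d r X (j + 2)).card : ℝ) := hcast
            _ ≤ ((j : ℝ) + 3) * (s * ((qseq (j + 3) : ℝ) * M ^ (((j : ℝ) + 3) / 2)))
                + M * ((qseq (j + 2) : ℝ) * M ^ (((j : ℝ) + 2) / 2)) := by
                have t1 : ((j : ℝ) + 3) * ((Nr : ℝ) * ((Fset d r X (j + 3)).card : ℝ))
                    ≤ ((j : ℝ) + 3) * (s * ((qseq (j + 3) : ℝ) * M ^ (((j : ℝ) + 3) / 2))) :=
                  mul_le_mul_of_nonneg_left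
                    (mul_le_mul hDs ih3 (by positivity) hs0) (by positivity)
                have t2 : M * ((Fset d r X (j + 2)).card : ℝ)
                    ≤ M * ((qseq (j + 2) : ℝ) * M ^ (((j : ℝ) + 2) / 2)) :=
                  mul_le_mul_of_nonneg_left ih2 hMpos.le
                have eq1 : ((j : ℝ) + 3) * (Nr : ℝ) * ((Fset d r X (j + 3)).card : ℝ)
                    = ((j : ℝ) + 3) * ((Nr : ℝ) * ((Fset d r X (j + 3)).card : ℝ)) := by ring
                have eq2 : (X.card : ℝ) * (Nr : ℝ) * ((Fset d r X (j + 2)).card : ℝ)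
                    = M * ((Fset d r X (j + 2)).card : ℝ) := by rw [hM]
                linarith
            _ = (qseq (j + 4) : ℝ) * M ^ (((j : ℝ) + 4) / 2) := by
                linear_combination (-(((j : ℝ) + 3) * (qseq (j + 3) : ℝ))) * e1
                  + (-((qseq (j + 2) : ℝ))) * e2
                  + (-(M ^ (((j : ℝ) + 4) / 2))) * hq
    have := key n hn
    rwa [hM] at this
end

section
/- Let Λ be a set with a symmetric nonnegative distance function d, let X ⊆ Λ be finite, let r > 0, and let N_r ∈ ℕ be such that for every x ∈ X the set {y ∈ X : d(x,y) ≤ r} has at most N_r elements. Then for every n ≥ 2 the recursion bound N(X, n+2, r) ≤ (n+1)·N_r·N(X, n+1, r) + |X|·N_r·N(X, n, r) holds. -/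
open scoped BigOperators

lemma setDist_singleton_le_iff {Λ : Type*} (d : Λ → Λ → ℝ) (y : Λ) (T : Finset Λ)
    (hT : T.Nonempty) (r : ℝ) :
    setDist d {y} T ≤ r ↔ ∃ t ∈ T, d y t ≤ r := by
  classical
  have hset : {s : ℝ | ∃ a ∈ ({y} : Finset Λ), ∃ t ∈ T, s = d a t}
      = ↑(T.image (fun t => d y t)) := by
    ext s
    simp [eq_comm]
  unfold setDist
  rw [hset]
  have hfin : (↑(T.image (fun t => d y t)) : Set ℝ).Finite := Finset.finite_toSet _
  have hne : (↑(T.image (fun t => d y t)) : Set ℝ).Nonempty := by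
    simpa using (hT.image (fun t => d y t))
  constructor
  · intro h
    have hmem := hne.csInf_mem hfin
    obtain ⟨t, ht, heq⟩ := Finset.mem_image.mp (Finset.mem_coe.mp hmem)
    exact ⟨t, ht, by rw [heq]; exact h⟩
  · rintro ⟨t, ht, hd⟩
    refine le_trans (csInf_le hfin.bddBelow ?_) hd
    exact Finset.mem_coe.mpr (Finset.mem_image.mpr ⟨t, ht, rfl⟩)

lemma spread_le_iff {Λ : Type*} [DecidableEq Λ] (d : Λ → Λ → ℝ) (Y : Finset Λ)
    (hY : 2 ≤ Y.card) (r : ℝ) :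
    spread d Y ≤ r ↔ ∀ y ∈ Y, ∃ z ∈ Y.erase y, d y z ≤ r := by
  classical
  have hne : Y.Nonempty := Finset.card_pos.mp (by omega)
  have herase : ∀ y ∈ Y, (Y.erase y).Nonempty := by
    intro y hy
    apply Finset.card_pos.mp
    rw [Finset.card_erase_of_mem hy]; omega
  have hset : {s : ℝ | ∃ y ∈ Y, s = setDist d {y} (Y.erase y)}
      = ↑(Y.image (fun y => setDist d {y} (Y.erase y))) := by
    ext s; simp [eq_comm]
  unfold spread
  rw [hset]
  have hfin : (↑(Y.image (fun y => setDist d {y} (Y.erase y))) : Set ℝ).Finite :=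
    Finset.finite_toSet _
  have hne' : (↑(Y.image (fun y => setDist d {y} (Y.erase y))) : Set ℝ).Nonempty := by
    exact Finset.coe_nonempty.mpr (hne.image (fun y => setDist d {y} (Y.erase y)))
  rw [csSup_le_iff hfin.bddAbove hne']
  constructor
  · intro h y hy
    have := h (setDist d {y} (Y.erase y))
      (Finset.mem_coe.mpr (Finset.mem_image.mpr ⟨y, hy, rfl⟩))
    exact (setDist_singleton_le_iff d y (Y.erase y) (herase y hy) r).mp this
  · intro h s hs
    obtain ⟨y, hy, heq⟩ := Finset.mem_image.mp (Finset.mem_coe.mp hs)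
    rw [← heq]

    exact (setDist_singleton_le_iff d y (Y.erase y) (herase y hy) r).mpr (h y hy)

theorem stmt5 {Λ : Type*} [DecidableEq Λ] (d : Λ → Λ → ℝ)
    (hsym : ∀ x y, d x y = d y x) (hnonneg : ∀ x y, 0 ≤ d x y)
    (X : Finset Λ) (r : ℝ) (hr : 0 < r) (Nr : ℕ)
    (hN : ∀ x ∈ X, ({y | y ∈ X ∧ d x y ≤ r} : Set Λ).ncard ≤ Nr)
    (n : ℕ) (hn : 2 ≤ n) :
    countSpread d X (n + 2) r ≤
      (n + 1) * Nr * countSpread d X (n + 1) r + X.card * Nr * countSpread d X n r := by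
  classical
  set A : ℕ → Finset (Finset Λ) :=
    fun m => X.powerset.filter (fun Y => Y.card = m ∧ spread d Y ≤ r) with hAdef
  have hA : ∀ m, countSpread d X m r = (A m).card := by
    intro m
    rw [countSpread]
    have hs : {Y : Finset Λ | Y ⊆ X ∧ Y.card = m ∧ spread d Y ≤ r} = ↑(A m) := by
      ext Y
      simp [hAdef, and_assoc]
    rw [hs, Set.ncard_coe_finset]
  have hmemA : ∀ {m Y}, Y ∈ A m ↔ Y ⊆ X ∧ Y.card = m ∧ spread d Y ≤ r := by
    intro m Y
    simp [hAdef, and_assoc]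
  have hball : ∀ x ∈ X, (X.filter (fun y => d x y ≤ r)).card ≤ Nr := by
    intro x hx
    have h := hN x hx
    have : {y | y ∈ X ∧ d x y ≤ r} = ↑(X.filter (fun y => d x y ≤ r)) := by
      ext y; simp
    rwa [this, Set.ncard_coe_finset] at h
  rw [hA, hA, hA]
  set P : Finset Λ → Prop := fun Y => ∃ y ∈ Y, spread d (Y.erase y) ≤ r with hPdef
  have hsplit := Finset.card_filter_add_card_filter_not (s := A (n+2)) (p := P)
  -- Bound 1
  have hB : ((A (n+2)).filter P) ⊆ (A (n+1)).biUnion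
      (fun Y' => (X.filter (fun y => ∃ y' ∈ Y', d y y' ≤ r)).image (fun y => insert y Y')) := by
    intro Y hY
    rw [Finset.mem_filter] at hY
    obtain ⟨hYA, y, hyY, hsp'⟩ := hY
    obtain ⟨hYX, hYcard, hYsp⟩ := hmemA.mp hYA
    rw [Finset.mem_biUnion]
    refine ⟨Y.erase y, hmemA.mpr ⟨(Finset.erase_subset y Y).trans hYX, ?_, hsp'⟩, ?_⟩
    · rw [Finset.card_erase_of_mem hyY, hYcard]; omega
    · rw [Finset.mem_image]
      refine ⟨y, ?_, Finset.insert_erase hyY⟩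
      rw [Finset.mem_filter]
      obtain ⟨z, hz, hdz⟩ := (spread_le_iff d Y (by omega) r).mp hYsp y hyY
      exact ⟨hYX hyY, z, hz, hdz⟩
  have hBcard : ((A (n+2)).filter P).card ≤ (A (n+1)).card * ((n+1) * Nr) := by
    refine le_trans (Finset.card_le_card hB) (le_trans (Finset.card_biUnion_le) ?_)
    rw [← smul_eq_mul, ← Finset.sum_const]
    refine Finset.sum_le_sum ?_
    intro Y' hY'
    obtain ⟨hY'X, hY'card, _⟩ := hmemA.mp hY'
    refine le_trans (Finset.card_image_le) ?_
    have hsub : X.filter (fun y => ∃ y' ∈ Y', d y y' ≤ r)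
        ⊆ Y'.biUnion (fun y' => X.filter (fun y => d y' y ≤ r)) := by
      intro y hy
      rw [Finset.mem_filter] at hy
      obtain ⟨hyX, y', hy', hd⟩ := hy
      rw [Finset.mem_biUnion]
      exact ⟨y', hy', Finset.mem_filter.mpr ⟨hyX, by rwa [← hsym]⟩⟩
    refine le_trans (Finset.card_le_card hsub) (le_trans Finset.card_biUnion_le ?_)
    calc ∑ y' ∈ Y', (X.filter (fun y => d y' y ≤ r)).card
        ≤ ∑ _y' ∈ Y', Nr := Finset.sum_le_sum (fun y' hy' => hball y' (hY'X hy'))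
      _ = (n+1) * Nr := by rw [Finset.sum_const, hY'card, smul_eq_mul]
  -- Bound 2
  have hC : ((A (n+2)).filter (fun Y => ¬ P Y)) ⊆ (A n).biUnion
      (fun Y'' => ((X ×ˢ X).filter (fun p => d p.1 p.2 ≤ r)).image
        (fun p => insert p.1 (insert p.2 Y''))) := by
    intro Y hY
    rw [Finset.mem_filter] at hY
    obtain ⟨hYA, hnP⟩ := hY
    obtain ⟨hYX, hYcard, hYsp⟩ := hmemA.mp hYA
    simp only [hPdef] at hnP
    push_neg at hnP
    have hspY := (spread_le_iff d Y (by omega) r).mp hYsp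
    -- for each y ∈ Y, removing y isolates some w
    have hiso : ∀ y ∈ Y, ∃ w ∈ Y.erase y, ∀ z ∈ (Y.erase y).erase w, ¬ d w z ≤ r := by
      intro y hy
      have h1 : ¬ spread d (Y.erase y) ≤ r := not_le.mpr (hnP y hy)
      have hcard' : (Y.erase y).card = n + 1 := by
        rw [Finset.card_erase_of_mem hy, hYcard]; omega
      rw [spread_le_iff d (Y.erase y) (by omega) r] at h1
      push_neg at h1
      obtain ⟨w, hw1, hw2⟩ := h1
      exact ⟨w, hw1, fun z hz => not_le.mpr (hw2 z hz)⟩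
    have hne : Y.Nonempty := Finset.card_pos.mp (by omega)
    obtain ⟨y, hy⟩ := hne
    obtain ⟨w, hw, hwonly⟩ := hiso y hy
    have hwY : w ∈ Y := (Finset.mem_erase.mp hw).2
    have hwy : w ≠ y := (Finset.mem_erase.mp hw).1
    -- w's unique neighbor is y, so d w y ≤ r
    have hdwy : d w y ≤ r := by
      obtain ⟨z, hz, hdz⟩ := hspY w hwY
      rcases eq_or_ne z y with rfl | hzy
      · exact hdz
      · exfalso
        refine hwonly z ?_ hdz
        rw [Finset.mem_erase] at hz ⊢
        exact ⟨hz.1, Finset.mem_erase.mpr ⟨hzy, hz.2⟩⟩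
    -- y's unique neighbor is w
    obtain ⟨u, hu, huonly⟩ := hiso w hwY
    have huY : u ∈ Y := (Finset.mem_erase.mp hu).2
    have huw : u ≠ w := (Finset.mem_erase.mp hu).1
    have hduw : d u w ≤ r := by
      obtain ⟨z, hz, hdz⟩ := hspY u huY
      rcases eq_or_ne z w with rfl | hzw
      · exact hdz
      · exfalso
        refine huonly z ?_ hdz
        rw [Finset.mem_erase] at hz ⊢
        exact ⟨hz.1, Finset.mem_erase.mpr ⟨hzw, hz.2⟩⟩
    have huy : u = y := by
      by_contra huy
      refine hwonly u ?_ (by rwa [hsym])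
      rw [Finset.mem_erase]
      exact ⟨huw, Finset.mem_erase.mpr ⟨huy, huY⟩⟩
    rw [huy] at huonly
    -- so: ∀ z ∈ (Y.erase w).erase y, ¬ d y z ≤ r  (from huonly)
    set Y'' := (Y.erase y).erase w with hY''def
    have hY''card : Y''.card = n := by
      rw [hY''def, Finset.card_erase_of_mem hw, Finset.card_erase_of_mem hy, hYcard]; omega
    have hY''sp : spread d Y'' ≤ r := by
      rw [spread_le_iff d Y'' (by omega) r]
      intro v hv
      have hvY : v ∈ Y := (Finset.mem_erase.mp ((Finset.mem_erase.mp hv).2)).2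
      have hvy : v ≠ y := (Finset.mem_erase.mp ((Finset.mem_erase.mp hv).2)).1
      have hvw : v ≠ w := (Finset.mem_erase.mp hv).1
      obtain ⟨z, hz, hdz⟩ := hspY v hvY
      have hzv : z ≠ v := (Finset.mem_erase.mp hz).1
      have hzY : z ∈ Y := (Finset.mem_erase.mp hz).2
      have hzy : z ≠ y := by
        rintro rfl
        refine huonly v ?_ (by rwa [hsym])
        rw [Finset.mem_erase]
        exact ⟨hvy, Finset.mem_erase.mpr ⟨hvw, hvY⟩⟩
      have hzw : z ≠ w := by
        rintro rfl
        refine hwonly v ?_ (by rwa [hsym])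
        rw [Finset.mem_erase]
        exact ⟨hvw, Finset.mem_erase.mpr ⟨hvy, hvY⟩⟩
      refine ⟨z, ?_, hdz⟩
      rw [Finset.mem_erase, hY''def, Finset.mem_erase, Finset.mem_erase]
      exact ⟨hzv, hzw, hzy, hzY⟩
    rw [Finset.mem_biUnion]
    refine ⟨Y'', hmemA.mpr ⟨?_, hY''card, hY''sp⟩, ?_⟩
    · exact ((Finset.erase_subset _ _).trans (Finset.erase_subset _ _)).trans hYX
    · rw [Finset.mem_image]
      refine ⟨(y, w), ?_, ?_⟩
      · rw [Finset.mem_filter, Finset.mem_product]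
        exact ⟨⟨hYX hy, hYX hwY⟩, by rwa [hsym]⟩
      · show insert y (insert w Y'') = Y
        rw [hY''def, Finset.insert_erase hw, Finset.insert_erase hy]
  have hCcard : ((A (n+2)).filter (fun Y => ¬ P Y)).card ≤ (A n).card * (X.card * Nr) := by
    refine le_trans (Finset.card_le_card hC) (le_trans (Finset.card_biUnion_le) ?_)
    rw [← smul_eq_mul, ← Finset.sum_const]
    refine Finset.sum_le_sum ?_
    intro Y'' _
    refine le_trans (Finset.card_image_le) ?_
    have hsub : (X ×ˢ X).filter (fun p => d p.1 p.2 ≤ r)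
        ⊆ X.biUnion (fun x => (X.filter (fun y => d x y ≤ r)).image (Prod.mk x)) := by
      rintro ⟨a, b⟩ hp
      rw [Finset.mem_filter, Finset.mem_product] at hp
      obtain ⟨⟨ha, hb⟩, hd⟩ := hp
      rw [Finset.mem_biUnion]
      exact ⟨a, ha, Finset.mem_image.mpr ⟨b, Finset.mem_filter.mpr ⟨hb, hd⟩, rfl⟩⟩
    refine le_trans (Finset.card_le_card hsub) (le_trans Finset.card_biUnion_le ?_)
    calc ∑ x ∈ X, ((X.filter (fun y => d x y ≤ r)).image (Prod.mk x)).card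
        ≤ ∑ x ∈ X, Nr := Finset.sum_le_sum
          (fun x hx => le_trans Finset.card_image_le (hball x hx))
      _ = X.card * Nr := by rw [Finset.sum_const, smul_eq_mul]
  calc (A (n+2)).card
      = ((A (n+2)).filter P).card + ((A (n+2)).filter (fun Y => ¬ P Y)).card := hsplit.symm
    _ ≤ (A (n+1)).card * ((n+1) * Nr) + (A n).card * (X.card * Nr) :=
        Nat.add_le_add hBcard hCcard
    _ = (n + 1) * Nr * (A (n+1)).card + X.card * Nr * (A n).card := by ring
end

section
/- Let Λ be a set with a symmetric nonnegative distance function d, let X ⊆ Λ be finite, let r > 0, and let N_r ∈ ℕ be such that for every x ∈ X the set {y ∈ X : d(x,y) ≤ r} has at most N_r elements. Then N(X, 2, r) ≤ |X| · N_r and N(X, 3, r) ≤ 2 · |X| · N_r². -/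
open scoped BigOperators

lemma setDist_singleton_le {Λ : Type*} (d : Λ → Λ → ℝ) (y : Λ) (T : Finset Λ)
    (hT : T.Nonempty) {r : ℝ} (h : setDist d {y} T ≤ r) : ∃ t ∈ T, d y t ≤ r := by
  have hset : {x : ℝ | ∃ s ∈ ({y} : Finset Λ), ∃ t ∈ T, x = d s t}
      = (fun t => d y t) '' ↑T := by
    ext x; simp [eq_comm]
  have hne : ((fun t => d y t) '' (↑T : Set Λ)).Nonempty :=
    (Finset.coe_nonempty.mpr hT).image _
  have hfin : ((fun t => d y t) '' (↑T : Set Λ)).Finite := T.finite_toSet.image _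
  have hmem := hne.csInf_mem hfin
  rw [setDist, hset] at h
  obtain ⟨t, ht, hdt⟩ := hmem
  exact ⟨t, ht, hdt.le.trans h⟩

lemma le_spread {Λ : Type*} [DecidableEq Λ] (d : Λ → Λ → ℝ) {Y : Finset Λ} {y : Λ}
    (hy : y ∈ Y) : setDist d {y} (Y.erase y) ≤ spread d Y := by
  have hset : {x : ℝ | ∃ y ∈ Y, x = setDist d {y} (Y.erase y)}
      = (fun y => setDist d {y} (Y.erase y)) '' ↑Y := by
    ext x; simp [eq_comm]
  unfold spread
  apply le_csSup
  · rw [hset]; exact (Y.finite_toSet.image _).bddAbove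
  · exact ⟨y, hy, rfl⟩

lemma spread_neighbor {Λ : Type*} [DecidableEq Λ] (d : Λ → Λ → ℝ) {Y : Finset Λ} {r : ℝ}
    (hcard : 2 ≤ Y.card) (h : spread d Y ≤ r) {y : Λ} (hy : y ∈ Y) :
    ∃ z ∈ Y, z ≠ y ∧ d y z ≤ r := by
  have h1 : setDist d {y} (Y.erase y) ≤ r := (le_spread d hy).trans h
  have hne : (Y.erase y).Nonempty := by
    rw [← Finset.card_pos, Finset.card_erase_of_mem hy]; omega
  obtain ⟨t, ht, hdt⟩ := setDist_singleton_le d y _ hne h1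
  rw [Finset.mem_erase] at ht
  exact ⟨t, ht.2, ht.1, hdt⟩

lemma pair_struct {Λ : Type*} [DecidableEq Λ] (d : Λ → Λ → ℝ) {Y : Finset Λ} {r : ℝ}
    (hcard : Y.card = 2) (h : spread d Y ≤ r) :
    ∃ a b, a ≠ b ∧ d a b ≤ r ∧ Y = {a, b} := by
  have hne : Y.Nonempty := by rw [← Finset.card_pos]; omega
  obtain ⟨y, hy⟩ := hne
  obtain ⟨z, hz, hzy, hdz⟩ := spread_neighbor d (by omega) h hy
  refine ⟨y, z, hzy.symm, hdz, ?_⟩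
  have hsub : ({y, z} : Finset Λ) ⊆ Y := by
    intro w hw; rw [Finset.mem_insert, Finset.mem_singleton] at hw
    rcases hw with rfl | rfl <;> assumption
  have : ({y, z} : Finset Λ).card = 2 := Finset.card_pair hzy.symm
  exact (Finset.eq_of_subset_of_card_le hsub (by omega)).symm

lemma triple_struct {Λ : Type*} [DecidableEq Λ] {d : Λ → Λ → ℝ}
    (hsym : ∀ x y, d x y = d y x) {Y : Finset Λ} {r : ℝ} (hcard : Y.card = 3)
    (h : spread d Y ≤ r) :
    ∃ y x z, x ≠ z ∧ d y x ≤ r ∧ d y z ≤ r ∧ Y = {y, x, z} := by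
  obtain ⟨a, b, c, hab, hac, hbc, rfl⟩ := Finset.card_eq_three.mp hcard
  have hca : ({a, b, c} : Finset Λ) = {c, a, b} := by ext w; simp; tauto
  have hba : ({a, b, c} : Finset Λ) = {b, a, c} := by ext w; simp; tauto
  have nb : ∀ w ∈ ({a, b, c} : Finset Λ), ∃ z ∈ ({a, b, c} : Finset Λ), z ≠ w ∧ d w z ≤ r :=
    fun w hw => spread_neighbor d (by omega) h hw
  obtain ⟨z, hz, hza, hdz⟩ := nb a (by simp)
  rw [Finset.mem_insert, Finset.mem_insert, Finset.mem_singleton] at hz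
  rcases hz with hz | hz | hz
  · exact absurd hz hza
  · rw [hz] at hdz
    obtain ⟨w, hw, hwc, hdw⟩ := nb c (by simp)
    rw [Finset.mem_insert, Finset.mem_insert, Finset.mem_singleton] at hw
    rcases hw with hw | hw | hw
    · rw [hw] at hdw
      exact ⟨a, b, c, hbc, hdz, by rw [hsym]; exact hdw, rfl⟩
    · rw [hw] at hdw
      exact ⟨b, a, c, hac, by rw [hsym]; exact hdz, by rw [hsym]; exact hdw, hba⟩
    · exact absurd hw hwc
  · rw [hz] at hdz
    obtain ⟨w, hw, hwb, hdw⟩ := nb b (by simp)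
    rw [Finset.mem_insert, Finset.mem_insert, Finset.mem_singleton] at hw
    rcases hw with hw | hw | hw
    · rw [hw] at hdw
      exact ⟨a, b, c, hbc, by rw [hsym]; exact hdw, hdz, rfl⟩
    · exact absurd hw hwb
    · rw [hw] at hdw
      exact ⟨c, a, b, hab, by rw [hsym]; exact hdz, by rw [hsym]; exact hdw, hca⟩

lemma aux_count {α β : Type*} (S : Set α) (T : Finset β) (g : β → α)
    (h : ∀ Y ∈ S, ∃ p ∈ T, g p = Y) : S.ncard ≤ T.card := by
  have hsub : S ⊆ g '' ↑T := by
    intro Y hY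
    obtain ⟨p, hp, hg⟩ := h Y hY
    exact ⟨p, hp, hg⟩
  calc S.ncard ≤ (g '' ↑T).ncard := Set.ncard_le_ncard hsub (T.finite_toSet.image g)
    _ ≤ (↑T : Set β).ncard := Set.ncard_image_le T.finite_toSet
    _ = T.card := Set.ncard_coe_finset T

theorem stmt6' {Λ : Type*} [DecidableEq Λ] (d : Λ → Λ → ℝ)
    (hsym : ∀ x y, d x y = d y x) (hnonneg : ∀ x y, 0 ≤ d x y)
    (X : Finset Λ) (r : ℝ) (hr : 0 < r) (Nr : ℕ)
    (hN : ∀ x ∈ X, ({y | y ∈ X ∧ d x y ≤ r} : Set Λ).ncard ≤ Nr) :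
    ({Y : Finset Λ | Y ⊆ X ∧ Y.card = 2 ∧ spread d Y ≤ r}).ncard ≤ X.card * Nr ∧
    ({Y : Finset Λ | Y ⊆ X ∧ Y.card = 3 ∧ spread d Y ≤ r}).ncard ≤ 2 * X.card * Nr ^ 2 := by
  classical
  have hB : ∀ x ∈ X, (X.filter fun y => d x y ≤ r).card ≤ Nr := by
    intro x hx
    have hco : ((X.filter fun y => d x y ≤ r : Finset Λ) : Set Λ)
        = {y | y ∈ X ∧ d x y ≤ r} := by ext z; simp
    have := hN x hx
    rw [← hco, Set.ncard_coe_finset] at this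
    exact this
  constructor
  · set T : Finset (Λ × Λ) :=
      X.biUnion (fun x => (X.filter fun y => d x y ≤ r).image fun y => (x, y)) with hT
    have key : ∀ Y ∈ {Y : Finset Λ | Y ⊆ X ∧ Y.card = 2 ∧ spread d Y ≤ r},
        ∃ p ∈ T, ({p.1, p.2} : Finset Λ) = Y := by
      rintro Y ⟨hYX, hY2, hYs⟩
      obtain ⟨a, b, hab, hd, rfl⟩ := pair_struct d hY2 hYs
      have ha : a ∈ X := hYX (by simp)
      have hb : b ∈ X := hYX (by simp)
      refine ⟨(a, b), ?_, rfl⟩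
      rw [hT, Finset.mem_biUnion]
      exact ⟨a, ha, Finset.mem_image.mpr ⟨b, Finset.mem_filter.mpr ⟨hb, hd⟩, rfl⟩⟩
    refine (aux_count _ T _ key).trans ?_
    calc T.card ≤ ∑ x ∈ X, ((X.filter fun y => d x y ≤ r).image fun y => (x, y)).card :=
        Finset.card_biUnion_le
      _ ≤ ∑ _x ∈ X, Nr := Finset.sum_le_sum fun x hx =>
          Finset.card_image_le.trans (hB x hx)
      _ = X.card * Nr := by rw [Finset.sum_const, smul_eq_mul]
  · set T : Finset (Λ × Λ × Λ) :=
      X.biUnion (fun x => (((X.filter fun y => d x y ≤ r)) ×ˢ ((X.filter fun y => d x y ≤ r))).image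
        fun q => (x, q.1, q.2)) with hT
    have key : ∀ Y ∈ {Y : Finset Λ | Y ⊆ X ∧ Y.card = 3 ∧ spread d Y ≤ r},
        ∃ p ∈ T, ({p.1, p.2.1, p.2.2} : Finset Λ) = Y := by
      rintro Y ⟨hYX, hY3, hYs⟩
      obtain ⟨y, x, z, hxz, hdx, hdz, rfl⟩ := triple_struct hsym hY3 hYs
      have hy : y ∈ X := hYX (by simp)
      have hx : x ∈ X := hYX (by simp)
      have hz : z ∈ X := hYX (by simp)
      refine ⟨(y, x, z), ?_, rfl⟩
      rw [hT, Finset.mem_biUnion]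
      refine ⟨y, hy, Finset.mem_image.mpr ⟨(x, z), ?_, rfl⟩⟩
      rw [Finset.mem_product]
      exact ⟨Finset.mem_filter.mpr ⟨hx, hdx⟩, Finset.mem_filter.mpr ⟨hz, hdz⟩⟩
    refine (aux_count _ T _ key).trans ?_
    have hcard : T.card ≤ X.card * (Nr * Nr) := by
      calc T.card ≤ ∑ x ∈ X, ((((X.filter fun y => d x y ≤ r)) ×ˢ ((X.filter fun y => d x y ≤ r))).image
            fun q => (x, q.1, q.2)).card := Finset.card_biUnion_le
        _ ≤ ∑ _x ∈ X, Nr * Nr := Finset.sum_le_sum fun x hx => by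
            refine Finset.card_image_le.trans ?_
            rw [Finset.card_product]
            exact Nat.mul_le_mul (hB x hx) (hB x hx)
        _ = X.card * (Nr * Nr) := by rw [Finset.sum_const, smul_eq_mul]
    refine hcard.trans ?_
    have : X.card * (Nr * Nr) = X.card * Nr ^ 2 := by ring
    rw [this]
    nlinarith [sq_nonneg Nr]

theorem stmt6 {Λ : Type*} [DecidableEq Λ] (d : Λ → Λ → ℝ)
    (hsym : ∀ x y, d x y = d y x) (hnonneg : ∀ x y, 0 ≤ d x y)
    (X : Finset Λ) (r : ℝ) (hr : 0 < r) (Nr : ℕ)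
    (hN : ∀ x ∈ X, ({y | y ∈ X ∧ d x y ≤ r} : Set Λ).ncard ≤ Nr) :
    countSpread d X 2 r ≤ X.card * Nr ∧ countSpread d X 3 r ≤ 2 * X.card * Nr ^ 2 :=
  stmt6' d hsym hnonneg X r hr Nr hN
end

section
/- Let A be a unital normed ℂ-algebra with submultiplicative norm, B a unital associative ℂ-algebra, X a finite nonempty set, ι_x : A → B (x ∈ X) algebra homomorphisms with pairwise commuting images for distinct sites, ω : A → ℂ linear, and Φ the associated fluctuation operators. Let φ : B → ℂ be linear, n ≥ 2, and let C ≥ 0 be a constant such that |φ(Φ(b₁)⋯Φ(b_{n−1}))| ≤ C·‖b₁‖⋯‖b_{n−1}‖ for all b₁,…,b_{n−1} ∈ A. Then for all a₁,…,aₙ ∈ A and every index 1 ≤ i ≤ n−1: |φ( Φ(a₁)⋯Φ(a_{i−1}) · ( Φ(a_i)Φ(a_{i+1}) − Φ(a_{i+1})Φ(a_i) − ω(a_i a_{i+1} − a_{i+1} a_i)·1_B ) · Φ(a_{i+2})⋯Φ(aₙ) )| ≤ 2 · |X|^{−1/2} · C · ‖a₁‖⋯‖aₙ‖. -/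
open scoped BigOperators

/-- The fluctuation operator `Φ(a) := |X|^{-1/2} ∑_{x∈X} (ι_x(a) − ω(a)·1_B)`. -/
noncomputable def fluct {A B X : Type*} [Ring A] [Algebra ℂ A] [Ring B] [Algebra ℂ B]
    [Fintype X] (ι : X → (A →ₐ[ℂ] B)) (ω : A →ₗ[ℂ] ℂ) (a : A) : B :=
  (((Fintype.card X : ℝ) ^ (-(1 : ℝ) / 2) : ℝ) : ℂ) •
    ∑ x : X, (ι x a - algebraMap ℂ B (ω a))

theorem fluct_comm {A B X : Type*} [Ring A] [Algebra ℂ A] [Ring B] [Algebra ℂ B]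
    [Fintype X] [Nonempty X] (ι : X → (A →ₐ[ℂ] B))
    (hcomm : ∀ x y : X, x ≠ y → ∀ a b : A, Commute (ι x a) (ι y b))
    (ω : A →ₗ[ℂ] ℂ) (a b : A) :
    fluct ι ω a * fluct ι ω b - fluct ι ω b * fluct ι ω a
      - algebraMap ℂ B (ω (a * b - b * a))
      = (((Fintype.card X : ℝ) ^ (-(1 : ℝ) / 2) : ℝ) : ℂ) • fluct ι ω (a * b - b * a) := by
  set r : ℂ := (((Fintype.card X : ℝ) ^ (-(1 : ℝ) / 2) : ℝ) : ℂ) with hr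
  have hcard : (0:ℝ) < Fintype.card X := by positivity
  have hreal : ((Fintype.card X : ℝ) ^ (-(1:ℝ)/2)) ^ 2 * (Fintype.card X : ℝ) = 1 := by
    rw [← Real.rpow_natCast ((Fintype.card X : ℝ) ^ (-(1:ℝ)/2)) 2,
      ← Real.rpow_mul hcard.le]
    norm_num
    rw [Real.rpow_neg_one]
    field_simp
  have hr2 : r * r * (Fintype.card X : ℂ) = 1 := by
    rw [hr, ← sq]
    exact_mod_cast congrArg (Complex.ofReal) hreal
  have key : ∀ x y : X, ∀ p q : A,
      (ι x p - algebraMap ℂ B (ω p)) * (ι y q - algebraMap ℂ B (ω q))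
        - (ι y q - algebraMap ℂ B (ω q)) * (ι x p - algebraMap ℂ B (ω p))
        = ι x p * ι y q - ι y q * ι x p := by
    intro x y p q
    simp only [mul_sub, sub_mul]
    rw [Algebra.commutes (ω p) (ι y q), Algebra.commutes (ω q) (ι x p),
      Algebra.commutes (ω p) (algebraMap ℂ B (ω q))]
    abel
  have hSS : (∑ x : X, (ι x a - algebraMap ℂ B (ω a))) * (∑ x : X, (ι x b - algebraMap ℂ B (ω b)))
      - (∑ x : X, (ι x b - algebraMap ℂ B (ω b))) * (∑ x : X, (ι x a - algebraMap ℂ B (ω a)))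
      = ∑ x : X, ι x (a * b - b * a) := by
    rw [Finset.sum_mul_sum, Finset.sum_mul_sum,
      show (∑ x : X, ∑ y : X, (ι x b - algebraMap ℂ B (ω b)) * (ι y a - algebraMap ℂ B (ω a)))
        = ∑ x : X, ∑ y : X, (ι y b - algebraMap ℂ B (ω b)) * (ι x a - algebraMap ℂ B (ω a))
        from Finset.sum_comm,
      ← Finset.sum_sub_distrib]
    refine Finset.sum_congr rfl fun x _ => ?_
    rw [← Finset.sum_sub_distrib, Finset.sum_eq_single x]
    · rw [key]; simp [map_mul]
    · intro y _ hy
      rw [key, (hcomm x y (fun h => hy (h ▸ rfl)) a b).eq, sub_self]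
    · simp
  simp only [fluct, ← hr]
  rw [smul_mul_smul_comm, smul_mul_smul_comm, ← smul_sub, hSS, smul_smul,
    Finset.sum_sub_distrib, Finset.sum_const, Finset.card_univ, smul_sub]
  congr 1
  rw [← Nat.cast_smul_eq_nsmul ℂ, smul_smul, hr2, one_smul]

/-- an index `1 ≤ i ≤ n−1` together with the operators `a₁,…,aₙ` is encoded by
splitting the list into a prefix `u` of length `k = i−1`, the distinguished pair `a, b`
(at positions `i, i+1`) and a suffix `w` of length `m = n−i−1`, with `k + 2 + m = n`. -/
theorem stmt9 {A B X : Type*} [NormedRing A] [NormedAlgebra ℂ A] [Ring B] [Algebra ℂ B]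
    [Fintype X] [Nonempty X] (ι : X → (A →ₐ[ℂ] B))
    (hcomm : ∀ x y : X, x ≠ y → ∀ a b : A, Commute (ι x a) (ι y b))
    (ω : A →ₗ[ℂ] ℂ) (φ : B →ₗ[ℂ] ℂ) (n : ℕ) (hn : 2 ≤ n) (C : ℝ) (hC : 0 ≤ C)
    (hφ : ∀ b : Fin (n - 1) → A,
      ‖φ ((List.ofFn fun j => fluct ι ω (b j)).prod)‖ ≤ C * ∏ j, ‖b j‖)
    (k m : ℕ) (hkm : k + 2 + m = n) (u : Fin k → A) (a b : A) (w : Fin m → A) :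
    ‖φ ((List.ofFn fun j => fluct ι ω (u j)).prod *
        (fluct ι ω a * fluct ι ω b - fluct ι ω b * fluct ι ω a
          - algebraMap ℂ B (ω (a * b - b * a))) *
        (List.ofFn fun j => fluct ι ω (w j)).prod)‖ ≤
      2 * (Fintype.card X : ℝ) ^ (-(1 : ℝ) / 2) * C *
        ((∏ j, ‖u j‖) * ‖a‖ * ‖b‖ * ∏ j, ‖w j‖) := by
  set rr : ℝ := (Fintype.card X : ℝ) ^ (-(1 : ℝ) / 2) with hrr
  have hrpos : 0 ≤ rr := by positivity
  -- list version of hφ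
  have hφ' : ∀ L : List A, L.length = n - 1 →
      ‖φ ((L.map (fluct ι ω)).prod)‖ ≤ C * (L.map (‖·‖)).prod := by
    intro L hL
    have hb := hφ (fun j => L.get (Fin.cast hL.symm j))
    have h1 : (List.ofFn fun j : Fin (n-1) => fluct ι ω (L.get (Fin.cast hL.symm j)))
        = L.map (fluct ι ω) := by
      apply List.ext_getElem <;> simp [hL]
    have h2 : (∏ j : Fin (n-1), ‖L.get (Fin.cast hL.symm j)‖) = (L.map (‖·‖)).prod := by
      rw [← List.prod_ofFn]
      congr 1
      apply List.ext_getElem <;> simp [hL]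
    rw [h1, h2] at hb
    exact hb
  set c : A := a * b - b * a with hc
  set L : List A := List.ofFn u ++ [c] ++ List.ofFn w with hLdef
  have hLlen : L.length = n - 1 := by
    simp [hLdef]
    omega
  have hmain := hφ' L hLlen
  have hmap : (L.map (fluct ι ω)).prod
      = (List.ofFn fun j => fluct ι ω (u j)).prod * fluct ι ω c *
        (List.ofFn fun j => fluct ι ω (w j)).prod := by
    simp [hLdef, List.map_append, List.prod_append, List.map_ofFn, mul_assoc,
      Function.comp_def]
  have hnorm : (L.map (‖·‖)).prod
      = (∏ j, ‖u j‖) * ‖c‖ * ∏ j, ‖w j‖ := by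
    simp [hLdef, List.map_append, List.prod_append, List.map_ofFn, List.prod_ofFn,
      Function.comp, mul_assoc]
  rw [hmap, hnorm] at hmain
  rw [fluct_comm ι hcomm ω a b, ← hc, ← hrr]
  have heq : (List.ofFn fun j => fluct ι ω (u j)).prod * ((rr:ℂ) • fluct ι ω c) *
      (List.ofFn fun j => fluct ι ω (w j)).prod
      = (rr:ℂ) • ((List.ofFn fun j => fluct ι ω (u j)).prod * fluct ι ω c *
        (List.ofFn fun j => fluct ι ω (w j)).prod) := by
    rw [mul_smul_comm, smul_mul_assoc]
  rw [heq, map_smul, smul_eq_mul, norm_mul, Complex.norm_real,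
    Real.norm_of_nonneg hrpos]
  have hcle : ‖c‖ ≤ 2 * ‖a‖ * ‖b‖ := by
    calc ‖c‖ ≤ ‖a * b‖ + ‖b * a‖ := norm_sub_le _ _
    _ ≤ ‖a‖ * ‖b‖ + ‖b‖ * ‖a‖ := add_le_add (norm_mul_le _ _) (norm_mul_le _ _)
    _ = 2 * ‖a‖ * ‖b‖ := by ring
  calc rr * ‖φ ((List.ofFn fun j => fluct ι ω (u j)).prod * fluct ι ω c *
        (List.ofFn fun j => fluct ι ω (w j)).prod)‖
      ≤ rr * (C * ((∏ j, ‖u j‖) * ‖c‖ * ∏ j, ‖w j‖)) := by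
        exact mul_le_mul_of_nonneg_left hmain hrpos
    _ ≤ rr * (C * ((∏ j, ‖u j‖) * (2 * ‖a‖ * ‖b‖) * ∏ j, ‖w j‖)) := by
        have h1 : 0 ≤ ∏ j, ‖u j‖ := Finset.prod_nonneg fun j _ => norm_nonneg _
        have h2 : 0 ≤ ∏ j, ‖w j‖ := Finset.prod_nonneg fun j _ => norm_nonneg _
        gcongr
    _ = 2 * rr * C * ((∏ j, ‖u j‖) * ‖a‖ * ‖b‖ * ∏ j, ‖w j‖) := by ring
end

section
/- Let B be a unital normed ℂ-algebra with submultiplicative norm and let φ : B → ℂ be a linear functional with |φ(b)| ≤ ‖b‖ for all b ∈ B. Let k ≥ 2, let A₁,…,A_k ∈ B, let G₀ ≥ 0 and δ₁,…,δ_{k−1} ∈ ℝ, and suppose that for each l = 1,…,k−1: |φ(A_l · A_{l+1}⋯A_k) − φ(A_l)·φ(A_{l+1}⋯A_k)| ≤ G₀ · ‖A_l‖ · ‖A_{l+1}⋯A_k‖ · e^{−δ_l}. Then |φ(A₁⋯A_k) − φ(A₁)φ(A₂)⋯φ(A_k)| ≤ G₀ · ‖A₁‖⋯‖A_k‖ ·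 ∑_{l=1}^{k−1} e^{−δ_l}. -/
open scoped BigOperators

/-- The (noncommutative, ordered) product `A_l · A_{l+1} ⋯ A_{k-1}` of the tail of a
family `A : Fin k → B` starting at position `l` (0-based). -/
noncomputable def prodFrom {B : Type*} [Ring B] {k : ℕ} (A : Fin k → B) (l : ℕ) : B :=
  (List.ofFn (fun j : Fin (k - l) => A ⟨l + j.1, by have h := j.isLt; omega⟩)).prod

lemma prodFrom_nil {B : Type*} [Ring B] {k : ℕ} (A : Fin k → B) (l : ℕ) (h : k ≤ l) :
    prodFrom A l = 1 := by
  unfold prodFrom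
  have hz : k - l = 0 := by omega
  rw [List.ofFn_congr hz]
  simp

lemma prodFrom_succ {B : Type*} [Ring B] {k : ℕ} (A : Fin k → B) (l : ℕ) (h : l < k) :
    prodFrom A l = A ⟨l, h⟩ * prodFrom A (l + 1) := by
  unfold prodFrom
  have hkl : k - l = (k - (l + 1)) + 1 := by omega
  rw [List.ofFn_congr hkl, List.ofFn_succ, List.prod_cons]
  congr 1
  refine congrArg List.prod (congrArg List.ofFn ?_)
  funext i
  congr 1
  apply Fin.ext
  simp
  omega

lemma prodFrom_zero {M : Type*} [CommRing M] {k : ℕ} (f : Fin k → M) :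
    prodFrom f 0 = ∏ i, f i := by
  unfold prodFrom
  rw [List.ofFn_congr (Nat.sub_zero k), List.prod_ofFn]
  apply Finset.prod_congr rfl
  intro i _
  congr 1
  apply Fin.ext
  simp

lemma prodFrom_norm_nonneg {B : Type*} [NormedRing B] {k : ℕ} (A : Fin k → B) (l : ℕ) :
    0 ≤ prodFrom (fun i => ‖A i‖) l := by
  unfold prodFrom
  apply List.prod_nonneg
  intro x hx
  rw [List.mem_ofFn] at hx
  obtain ⟨j, rfl⟩ := hx
  exact norm_nonneg _

lemma norm_prodFrom_le {B : Type*} [NormedRing B] {k : ℕ} (A : Fin k → B) (l : ℕ)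
    (h : l < k) : ‖prodFrom A l‖ ≤ prodFrom (fun i => ‖A i‖) l := by
  unfold prodFrom
  have hne : (List.ofFn (fun j : Fin (k - l) => A ⟨l + j.1, by have h := j.isLt; omega⟩)) ≠ [] := by
    simp only [ne_eq, List.ofFn_eq_nil_iff]
    omega
  refine le_of_le_of_eq (List.norm_prod_le' hne) ?_
  rw [List.map_ofFn]
  rfl

theorem stmt10 {B : Type*} [NormedRing B] [NormedAlgebra ℂ B]
    (φ : B →ₗ[ℂ] ℂ) (hφ : ∀ b : B, ‖φ b‖ ≤ ‖b‖)
    (k : ℕ) (hk : 2 ≤ k) (A : Fin k → B) (G₀ : ℝ) (hG₀ : 0 ≤ G₀) (δ : ℕ → ℝ)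
    (hcl : ∀ (l : ℕ) (hl : l + 2 ≤ k),
      ‖φ (A ⟨l, by omega⟩ * prodFrom A (l + 1))
          - φ (A ⟨l, by omega⟩) * φ (prodFrom A (l + 1))‖ ≤
        G₀ * ‖A ⟨l, by omega⟩‖ * ‖prodFrom A (l + 1)‖ * Real.exp (-δ l)) :
    ‖φ (prodFrom A 0) - ∏ i, φ (A i)‖ ≤
      G₀ * (∏ i, ‖A i‖) * ∑ l ∈ Finset.range (k - 1), Real.exp (-δ l) := by
  have key : ∀ n, 1 ≤ n → ∀ l, l + n = k →
      ‖φ (prodFrom A l) - prodFrom (fun i => φ (A i)) l‖ ≤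
        G₀ * prodFrom (fun i => ‖A i‖) l *
          ∑ j ∈ Finset.range (n - 1), Real.exp (-δ (l + j)) := by
    intro n hn
    induction n, hn using Nat.le_induction with
    | base =>
      intro l hl
      have h1 : l < k := by omega
      rw [prodFrom_succ A l h1, prodFrom_succ (fun i => φ (A i)) l h1,
        prodFrom_nil A (l+1) (by omega), prodFrom_nil (fun i => φ (A i)) (l+1) (by omega)]
      simp
    | succ n hn ih =>
      intro l hl
      obtain ⟨m, rfl⟩ : ∃ m, n = m + 1 := ⟨n - 1, by omega⟩
      have h1 : l < k := by omega
      have h2 : l + 1 < k := by omega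
      have hIH := ih (l + 1) (by omega)
      simp only [Nat.add_sub_cancel] at hIH ⊢
      rw [prodFrom_succ A l h1, prodFrom_succ (fun i => φ (A i)) l h1,
        prodFrom_succ (fun i => ‖A i‖) l h1,
        Finset.sum_range_succ' (fun j => Real.exp (-δ (l + j))) m]
      set a := A ⟨l, h1⟩ with ha
      set P := prodFrom A (l + 1) with hP
      set Fp := prodFrom (fun i => φ (A i)) (l + 1) with hFp
      set Nn := prodFrom (fun i => ‖A i‖) (l + 1) with hNn
      have hsplit : φ (a * P) - φ a * Fp = (φ (a * P) - φ a * φ P) + φ a * (φ P - Fp) := by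
        ring
      rw [hsplit]
      have hPN : ‖P‖ ≤ Nn := norm_prodFrom_le A (l + 1) h2
      have hNn0 : 0 ≤ Nn := prodFrom_norm_nonneg A (l + 1)
      have h3 : ‖φ (a * P) - φ a * φ P‖ ≤ G₀ * ‖a‖ * ‖P‖ * Real.exp (-δ l) :=
        hcl l (by omega)
      clear_value a P Fp Nn
      calc ‖(φ (a * P) - φ a * φ P) + φ a * (φ P - Fp)‖
          ≤ ‖φ (a * P) - φ a * φ P‖ + ‖φ a * (φ P - Fp)‖ :=
            norm_add_le _ _
        _ ≤ G₀ * ‖a‖ * ‖P‖ * Real.exp (-δ l)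
            + ‖a‖ * (G₀ * Nn * ∑ j ∈ Finset.range m, Real.exp (-δ (l + 1 + j))) := by
            refine add_le_add h3 ?_
            rw [norm_mul]
            exact mul_le_mul (hφ a) hIH (norm_nonneg _) (norm_nonneg a)
        _ ≤ G₀ * ‖a‖ * Nn * Real.exp (-δ l)
            + ‖a‖ * (G₀ * Nn * ∑ j ∈ Finset.range m, Real.exp (-δ (l + 1 + j))) :=
            add_le_add_left (mul_le_mul_of_nonneg_right
              (mul_le_mul_of_nonneg_left hPN (mul_nonneg hG₀ (norm_nonneg a)))
              (Real.exp_pos _).le) _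
        _ = G₀ * (‖a‖ * Nn) *
            ((∑ j ∈ Finset.range m, Real.exp (-δ (l + (j + 1)))) + Real.exp (-δ (l + 0))) := by
            have hs : (∑ j ∈ Finset.range m, Real.exp (-δ (l + (j + 1))))
                = ∑ j ∈ Finset.range m, Real.exp (-δ (l + 1 + j)) :=
              Finset.sum_congr rfl (fun j _ => by rw [show l + (j + 1) = l + 1 + j by omega])
            rw [hs, Nat.add_zero]
            generalize (∑ j ∈ Finset.range m, Real.exp (-δ (l + 1 + j))) = S
            ring_nf
  have h0 := key k (by omega) 0 (by omega)
  rw [prodFrom_zero (fun i => φ (A i)), prodFrom_zero (fun i => ‖A i‖)] at h0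
  simpa using h0
end
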